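/- arXiv:1503.01317 — 7 statements merged into one kernel-verified Lean document; each statement's English description precedes it below -/
import Mathlib

section
/- Every nonempty locally compact metrizable topological space without isolated points contains a compact subset homeomorphic to the Cantor space ℕ → {0,1} (the countable product of two-point discrete spaces). -/
open Set Topology

/-- Every nonempty locally compact metrizable space without isolated points contains a
compact subset homeomorphic to the Cantor space `ℕ → {0,1}`. -/
theorem exists_compact_homeomorph_cantor
    {X : Type*} [TopologicalSpace X] [LocallyCompactSpace X]
    [TopologicalSpace.MetrizableSpace X] [Nonempty X]
    (hX : ∀ x : X, interior {x} = (∅ : Set X)) :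
    ∃ K : Set X, IsCompact K ∧ Nonempty (K ≃ₜ (ℕ → Bool)) := by
  letI : MetricSpace X := TopologicalSpace.metrizableSpaceMetric X
  obtain ⟨x⟩ := ‹Nonempty X›
  obtain ⟨K, hKmem, -, hKcomp⟩ := local_compact_nhds (x := x) (n := univ) Filter.univ_mem
  haveI : CompactSpace K := isCompact_iff_compactSpace.mp hKcomp
  -- the preimage of the interior of K in the subtype K
  set S : Set K := Subtype.val ⁻¹' interior K with hS
  have hSne : S.Nonempty := ⟨⟨x, mem_of_mem_nhds hKmem⟩, mem_interior_iff_mem_nhds.mpr hKmem⟩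
  have hpre : Preperfect S := by
    intro y hy
    rw [accPt_iff_nhds]
    intro U hU
    rw [nhds_subtype_eq_comap] at hU
    obtain ⟨V, hV, hVU⟩ := hU
    have hVK : V ∩ interior K ∈ 𝓝 (y : X) :=
      Filter.inter_mem hV (isOpen_interior.mem_nhds hy)
    have hnotmem : ¬ (V ∩ interior K ⊆ {(y : X)}) := by
      intro h
      have : {(y : X)} ∈ 𝓝 (y : X) := Filter.mem_of_superset hVK h
      have := mem_interior_iff_mem_nhds.mpr this
      rw [hX (y : X)] at this
      exact this
    obtain ⟨z, hz, hzy⟩ := not_subset.mp hnotmem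
    refine ⟨⟨z, interior_subset hz.2⟩, ⟨hVU hz.1, hz.2⟩, ?_⟩
    simpa [Subtype.ext_iff] using hzy
  have hperf : Perfect (closure S) := hpre.perfect_closure
  obtain ⟨f, -, hfc, hfi⟩ :=
    hperf.exists_nat_bool_injection (hSne.mono subset_closure)
  -- compose with the inclusion
  set g : (ℕ → Bool) → X := fun a => (f a : X) with hg
  have hgc : Continuous g := continuous_subtype_val.comp hfc
  have hgi : Function.Injective g := Subtype.val_injective.comp hfi
  have hemb : IsEmbedding g := (hgc.isClosedEmbedding hgi).toIsEmbedding
  refine ⟨Set.range g, isCompact_range hgc, ⟨hemb.toHomeomorph.symm⟩⟩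
end

section
/- Let β be a minimal, purely infinite action of a countable group Γ on a compact metrizable space X, and let n ∈ ℕ. Assume X satisfies the following covering-dimension condition: every finite open cover of X admits a finite open refinement (Y_j)_{j∈J} covering X (each Y_j contained in some member of the original cover) whose index set can be partitioned J = J_0 ⊔ J_1 ⊔ ⋯ ⊔ J_n such that for each k the sets (Y_j)_{j∈J_k} are pairwise disjoint. Then β has the weak (n+1)-filling property. -/
open Set Filter Topology Pointwise

section HomeoMetric

variable {X : Type*} [MetricSpace X] [CompactSpace X]

/-- The metric `d(φ,ψ) = max_x d(φ x, ψ x) + max_x d(φ⁻¹ x, ψ⁻¹ x)` on the homeomorphism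
group of a compact metric space. -/
noncomputable def homeoDist (φ ψ : X ≃ₜ X) : ℝ :=
  (⨆ x : X, dist (φ x) (ψ x)) + ⨆ x : X, dist (φ.symm x) (ψ.symm x)

/-- The topology on the homeomorphism group `H(X)` induced by the metric `homeoDist`. -/
noncomputable instance Homeomorph.metricTopology : TopologicalSpace (X ≃ₜ X) :=
  TopologicalSpace.generateFrom
    {B | ∃ (φ : X ≃ₜ X) (ε : ℝ), B = {ψ : X ≃ₜ X | homeoDist φ ψ < ε}}

end HomeoMetric

section Actions

variable (Γ : Type*) [Group Γ] (X : Type*) [TopologicalSpace X]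

/-- A family of homeomorphisms indexed by a group is an action if it is multiplicative:
`β (g * h) = β g ∘ β h`. -/
def IsAction (β : Γ → X ≃ₜ X) : Prop :=
  ∀ g h : Γ, β (g * h) = (β h).trans (β g)

/-- The space `H(Γ, X)` of actions of `Γ` on `X` by homeomorphisms, topologized as a
subspace of `∏_Γ H(X)`. -/
abbrev ActionSpace := {β : Γ → X ≃ₜ X // IsAction Γ X β}

variable {Γ X}

/-- An action is minimal if every orbit is dense. -/
def IsMinimalAction (β : Γ → X ≃ₜ X) : Prop :=
  ∀ x : X, Dense (range fun g : Γ => β g x)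

/-- An action is topologically free if the fixed point set of every nontrivial group
element has empty interior. -/
def IsTopFreeAction (β : Γ → X ≃ₜ X) : Prop :=
  ∀ s : Γ, s ≠ 1 → interior {x : X | β s x = x} = (∅ : Set X)

end Actions

/-- The space of probability measures on a countable discrete group `Γ`, with the topology
of pointwise convergence. -/
abbrev ProbMeas (Γ : Type*) := {μ : Γ → ℝ // (∀ g, 0 ≤ μ g) ∧ HasSum μ 1}

/-- An action of a countable discrete group on a compact space is (topologically) amenable
if there is a sequence of continuous maps `μ_n : Z → Prob(Γ)` with
`sup_{z ∈ Z} ‖s • μ_n^z - μ_n^{s•z}‖₁ → 0` for every `s ∈ Γ`, where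
`(s • μ)(g) = μ (s⁻¹ g)`. -/
def IsAmenableAction {Γ Z : Type*} [Group Γ] [TopologicalSpace Z] (α : Γ → Z ≃ₜ Z) : Prop :=
  ∃ μ : ℕ → Z → ProbMeas Γ,
    (∀ n, Continuous (μ n)) ∧
    ∀ s : Γ, Tendsto
      (fun n => ⨆ z : Z, ∑' g : Γ, |(μ n z).1 (s⁻¹ * g) - (μ n (α s z)).1 g|)
      atTop (𝓝 0)

section SkewProduct

variable {Γ : Type*} [Group Γ] {Z Y G : Type*} [TopologicalSpace Z] [TopologicalSpace Y]
  [TopologicalSpace G] [Group G] [IsTopologicalGroup G] [MulAction G Y] [ContinuousSMul G Y]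

/-- An action of a topological group on a space is minimal if every orbit is dense. -/
def IsMinimalSMul (G Y : Type*) [TopologicalSpace Y] [SMul G Y] : Prop :=
  ∀ y : Y, Dense (range fun g : G => g • y)

/-- An action of a group on a space has the `m`-filling property if every nonempty open set
has `m` group translates which cover the space. -/
def SMulFilling (G Y : Type*) [TopologicalSpace Y] [SMul G Y] (m : ℕ) : Prop :=
  ∀ V : Set Y, IsOpen V → V.Nonempty → ∃ g : Fin m → G, (⋃ i, g i • V) = univ

/-- The homeomorphism `H(z, y) = (z, h_z • y)` of `Z × Y` associated with a continuous map
`h : Z → 𝒢`; the set of these is `𝒢_s`. -/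
def skewHomeo (h : C(Z, G)) : (Z × Y) ≃ₜ (Z × Y) where
  toFun p := (p.1, h p.1 • p.2)
  invFun p := (p.1, (h p.1)⁻¹ • p.2)
  left_inv p := by simp
  right_inv p := by simp
  continuous_toFun :=
    continuous_fst.prodMk ((h.continuous.comp continuous_fst).smul continuous_snd)
  continuous_invFun :=
    continuous_fst.prodMk (((h.continuous.comp continuous_fst).inv).smul continuous_snd)

/-- The diagonal action `ᾱ_s(z, y) = (α_s z, y)` on `Z × Y`. -/
def diagAction (α : Γ → Z ≃ₜ Z) (Y : Type*) [TopologicalSpace Y] (s : Γ) :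
    (Z × Y) ≃ₜ (Z × Y) :=
  (α s).prodCongr (Homeomorph.refl Y)

/-- The set `S_𝒢(α)` of all conjugates `H⁻¹ ∘ ᾱ ∘ H` of the diagonal action `ᾱ` by
homeomorphisms `H ∈ 𝒢_s`. -/
def skewPerturbations (α : Γ → Z ≃ₜ Z) (Y G : Type*) [TopologicalSpace Y]
    [TopologicalSpace G] [Group G] [IsTopologicalGroup G] [MulAction G Y]
    [ContinuousSMul G Y] : Set (Γ → (Z × Y) ≃ₜ (Z × Y)) :=
  {β | ∃ h : C(Z, G), β = fun s =>
    (skewHomeo h).trans ((diagAction α Y s).trans (skewHomeo h).symm)}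

end SkewProduct

section Bisections

variable {Γ X : Type*} [Group Γ] [TopologicalSpace X]

/-- An open `β`-bisection: a family `V = (V_g)_{g ∈ Γ}` of open sets whose members are
pairwise disjoint and whose translates `β_g(V_g)` are pairwise disjoint.  (These correspond
to open `G`-sets of the transformation groupoid `X ⋊_β Γ`.) -/
def IsOpenBisection (β : Γ → X ≃ₜ X) (V : Γ → Set X) : Prop :=
  (∀ g, IsOpen (V g)) ∧
  (∀ g h : Γ, g ≠ h → Disjoint (V g) (V h)) ∧
  (∀ g h : Γ, g ≠ h → Disjoint (β g '' V g) (β h '' V h))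

/-- The source `s(V) = ∪_g V_g` of a bisection. -/
def bisectionSource (V : Γ → Set X) : Set X := ⋃ g : Γ, V g

/-- The range `r(V) = ∪_g β_g(V_g)` of a bisection. -/
def bisectionRange (β : Γ → X ≃ₜ X) (V : Γ → Set X) : Set X := ⋃ g : Γ, β g '' V g

/-- `r(V W) = ∪_g β_g(V_g ∩ W)` for an open set `W`. -/
def bisectionRangeOn (β : Γ → X ≃ₜ X) (V : Γ → Set X) (W : Set X) : Set X :=
  ⋃ g : Γ, β g '' (V g ∩ W)

/-- The weak `n`-filling property of an action: for every nonempty open `W` there are `n`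
open bisections `V¹, …, Vⁿ` with `∪ᵢ r(Vⁱ W) = X`. -/
def HasWeakFilling (β : Γ → X ≃ₜ X) (n : ℕ) : Prop :=
  ∀ W : Set X, IsOpen W → W.Nonempty →
    ∃ V : Fin n → Γ → Set X, (∀ i, IsOpenBisection β (V i)) ∧
      (⋃ i, bisectionRangeOn β (V i) W) = univ

/-- Pure infiniteness of an action: every nonempty open `U` contains a nonempty open `V`
admitting two open bisections with ranges disjoint subsets of `V` and sources containing
`V`. -/
def IsPurelyInfiniteAction (β : Γ → X ≃ₜ X) : Prop :=
  ∀ U : Set X, IsOpen U → U.Nonempty →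
    ∃ V : Set X, V ⊆ U ∧ IsOpen V ∧ V.Nonempty ∧
      ∃ B₁ B₂ : Γ → Set X, IsOpenBisection β B₁ ∧ IsOpenBisection β B₂ ∧
        bisectionRange β B₁ ⊆ V ∧ V ⊆ bisectionSource B₁ ∧
        bisectionRange β B₂ ⊆ V ∧ V ⊆ bisectionSource B₂ ∧
        Disjoint (bisectionRange β B₁) (bisectionRange β B₂)

end Bisections

section Aux

namespace WFAux

variable {Γ X : Type*} [Group Γ] [TopologicalSpace X] {β : Γ → X ≃ₜ X}

lemma mul_apply (hact : IsAction Γ X β) (g h : Γ) (x : X) :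
    β (g * h) x = β g (β h x) := by
  rw [hact g h]; rfl

lemma one_apply (hact : IsAction Γ X β) (x : X) : β 1 x = x := by
  have h2 : β 1 x = β 1 (β 1 x) := by
    have := mul_apply hact 1 1 x
    rwa [mul_one] at this
  exact ((β 1).injective h2).symm

lemma apply_inv_apply (hact : IsAction Γ X β) (g : Γ) (x : X) :
    β g (β g⁻¹ x) = x := by
  rw [← mul_apply hact, mul_inv_cancel, one_apply hact]

lemma inv_apply_apply (hact : IsAction Γ X β) (g : Γ) (x : X) :
    β g⁻¹ (β g x) = x := by
  rw [← mul_apply hact, inv_mul_cancel, one_apply hact]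

lemma image_inv_image (hact : IsAction Γ X β) (g : Γ) (S : Set X) :
    β g '' (β g⁻¹ '' S) = S := by
  rw [← Set.image_comp]
  have h : (β g) ∘ (β g⁻¹) = id := funext fun y => apply_inv_apply hact g y
  rw [h, Set.image_id]

lemma image_mul (hact : IsAction Γ X β) (a b : Γ) (S : Set X) :
    β (a * b) '' S = β a '' (β b '' S) := by
  have h : ⇑(β (a * b)) = ⇑(β a) ∘ ⇑(β b) := funext fun x => mul_apply hact a b x
  rw [h, Set.image_comp]

lemma piece_subset_source (B : Γ → Set X) (g : Γ) : B g ⊆ bisectionSource B :=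
  Set.subset_iUnion _ g

lemma image_piece_subset_range (B : Γ → Set X) (g : Γ) :
    β g '' B g ⊆ bisectionRange β B :=
  Set.subset_iUnion (fun g => β g '' B g) g

/-- The identity bisection on an open set. -/
def idB (V : Set X) : Γ → Set X := fun g => {x | x ∈ V ∧ g = 1}

lemma idB_one (V : Set X) : idB (Γ := Γ) V 1 = V := by
  ext x; simp [idB]

lemma idB_ne {g : Γ} (hg : g ≠ 1) (V : Set X) : idB V g = ∅ := by
  ext x; simp [idB, hg]

lemma idB_isBisection (hact : IsAction Γ X β) {V : Set X} (hV : IsOpen V) :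
    IsOpenBisection β (idB (Γ := Γ) V) := by
  refine ⟨fun g => ?_, fun g h hgh => ?_, fun g h hgh => ?_⟩
  · rcases eq_or_ne g 1 with rfl | hg
    · rw [idB_one]; exact hV
    · rw [idB_ne hg]; exact isOpen_empty
  · rcases eq_or_ne g 1 with rfl | hg
    · have hh : h ≠ 1 := fun e => hgh e.symm
      rw [idB_ne hh]; exact disjoint_bot_right
    · rw [idB_ne hg]; exact disjoint_bot_left
  · rcases eq_or_ne g 1 with rfl | hg
    · have hh : h ≠ 1 := fun e => hgh e.symm
      rw [idB_ne hh]; simp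
    · rw [idB_ne hg]; simp

lemma source_idB (V : Set X) : bisectionSource (idB (Γ := Γ) V) = V := by
  apply le_antisymm
  · refine Set.iUnion_subset fun g => ?_
    rcases eq_or_ne g 1 with rfl | hg
    · rw [idB_one]
    · rw [idB_ne hg]; exact Set.empty_subset _
  · intro x hx
    exact Set.mem_iUnion.2 ⟨1, by rw [idB_one]; exact hx⟩

lemma range_idB (hact : IsAction Γ X β) (V : Set X) :
    bisectionRange β (idB (Γ := Γ) V) = V := by
  apply le_antisymm
  · refine Set.iUnion_subset fun g => ?_
    rcases eq_or_ne g 1 with rfl | hg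
    · rw [idB_one]
      rintro x ⟨y, hy, rfl⟩
      rwa [one_apply hact]
    · rw [idB_ne hg]; simp
  · intro x hx
    refine Set.mem_iUnion.2 ⟨1, ⟨x, by rw [idB_one]; exact hx, one_apply hact x⟩⟩

/-- The inverse bisection. -/
def invB (β : Γ → X ≃ₜ X) (B : Γ → Set X) : Γ → Set X := fun g => β g⁻¹ '' B g⁻¹

lemma invB_isBisection (hact : IsAction Γ X β) {B : Γ → Set X}
    (hB : IsOpenBisection β B) : IsOpenBisection β (invB β B) := by
  refine ⟨fun g => (β g⁻¹).isOpenMap _ (hB.1 g⁻¹), fun g h hgh => ?_, fun g h hgh => ?_⟩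
  · exact hB.2.2 g⁻¹ h⁻¹ (fun e => hgh (inv_injective e))
  · have h1 : β g '' invB β B g = B g⁻¹ := image_inv_image hact g _
    have h2 : β h '' invB β B h = B h⁻¹ := image_inv_image hact h _
    rw [h1, h2]
    exact hB.2.1 g⁻¹ h⁻¹ (fun e => hgh (inv_injective e))

lemma source_invB (hact : IsAction Γ X β) (B : Γ → Set X) :
    bisectionSource (invB β B) = bisectionRange β B := by
  apply le_antisymm
  · refine Set.iUnion_subset fun g => ?_
    exact (image_piece_subset_range B g⁻¹)
  · refine Set.iUnion_subset fun g => ?_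
    intro x hx
    refine Set.mem_iUnion.2 ⟨g⁻¹, ?_⟩
    simpa [invB] using hx
  
lemma range_invB (hact : IsAction Γ X β) (B : Γ → Set X) :
    bisectionRange β (invB β B) = bisectionSource B := by
  apply le_antisymm
  · refine Set.iUnion_subset fun g => ?_
    rw [show β g '' invB β B g = B g⁻¹ from image_inv_image hact g _]
    exact piece_subset_source B g⁻¹
  · refine Set.iUnion_subset fun g => ?_
    intro x hx
    refine Set.mem_iUnion.2 ⟨g⁻¹, ?_⟩
    rw [show β g⁻¹ '' invB β B g⁻¹ = B g⁻¹⁻¹ from image_inv_image hact g⁻¹ _, inv_inv]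
    exact hx

/-- The translate of a bisection by a fixed group element. -/
def translB (g : Γ) (B : Γ → Set X) : Γ → Set X := fun h => B (g⁻¹ * h)

lemma translB_isBisection (hact : IsAction Γ X β) (g : Γ) {B : Γ → Set X}
    (hB : IsOpenBisection β B) : IsOpenBisection β (translB g B) := by
  refine ⟨fun h => hB.1 _, fun h h' hne => hB.2.1 _ _ (by
      intro e
      exact hne (mul_left_cancel e)), fun h h' hne => ?_⟩
  have e1 : ∀ k : Γ, β k '' translB g B k = β g '' (β (g⁻¹ * k) '' B (g⁻¹ * k)) := by
    intro k
    rw [show translB g B k = B (g⁻¹ * k) from rfl, ← image_mul hact, mul_inv_cancel_left]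
  rw [e1 h, e1 h']
  refine (hB.2.2 (g⁻¹ * h) (g⁻¹ * h') ?_).image ((β g).injective.injOn)
    (Set.subset_univ _) (Set.subset_univ _)
  intro e
  exact hne (mul_left_cancel e)

lemma source_translB (g : Γ) (B : Γ → Set X) :
    bisectionSource (translB g B) = bisectionSource B := by
  apply le_antisymm
  · exact Set.iUnion_subset fun h => piece_subset_source B (g⁻¹ * h)
  · refine Set.iUnion_subset fun h => ?_
    have : B h = translB g B (g * h) := by simp [translB]
    rw [this]
    exact piece_subset_source (translB g B) (g * h)

lemma range_translB (hact : IsAction Γ X β) (g : Γ) (B : Γ → Set X) :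
    bisectionRange β (translB g B) = β g '' bisectionRange β B := by
  apply le_antisymm
  · refine Set.iUnion_subset fun h => ?_
    have e1 : β h '' translB g B h = β g '' (β (g⁻¹ * h) '' B (g⁻¹ * h)) := by
      rw [show translB g B h = B (g⁻¹ * h) from rfl, ← image_mul hact, mul_inv_cancel_left]
    rw [e1]
    exact Set.image_mono (image_piece_subset_range B (g⁻¹ * h))
  · rw [bisectionRange, Set.image_iUnion]
    refine Set.iUnion_subset fun b => ?_
    rw [← image_mul hact]
    have h1 : translB g B (g * b) = B b := by simp [translB]
    rw [← h1]
    exact image_piece_subset_range (translB g B) (g * b)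

/-- Range restriction of a bisection. -/
def restrB (β : Γ → X ≃ₜ X) (B : Γ → Set X) (T : Set X) : Γ → Set X :=
  fun g => B g ∩ β g ⁻¹' T

lemma restrB_isBisection {B : Γ → Set X} (hB : IsOpenBisection β B) {T : Set X}
    (hT : IsOpen T) : IsOpenBisection β (restrB β B T) := by
  refine ⟨fun g => (hB.1 g).inter (hT.preimage (β g).continuous),
    fun g h hgh => (hB.2.1 g h hgh).mono Set.inter_subset_left Set.inter_subset_left,
    fun g h hgh => (hB.2.2 g h hgh).mono ?_ ?_⟩
  · exact Set.image_mono Set.inter_subset_left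
  · exact Set.image_mono Set.inter_subset_left

lemma source_restrB_subset (B : Γ → Set X) (T : Set X) :
    bisectionSource (restrB β B T) ⊆ bisectionSource B :=
  Set.iUnion_mono fun g => Set.inter_subset_left

lemma range_restrB (B : Γ → Set X) (T : Set X) :
    bisectionRange β (restrB β B T) = bisectionRange β B ∩ T := by
  have : ∀ g, β g '' (restrB β B T g) = β g '' B g ∩ T := fun g =>
    Set.image_inter_preimage _ _ _
  rw [bisectionRange]
  simp_rw [this]
  rw [← Set.iUnion_inter]
  rfl

/-- Composition of bisections: apply `C` first, then `B`. -/
def compB (β : Γ → X ≃ₜ X) (B C : Γ → Set X) : Γ → Set X :=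
  fun g => ⋃ (a : Γ) (b : Γ) (_ : a * b = g), C b ∩ β b ⁻¹' (B a)

lemma mem_compB {B C : Γ → Set X} {g : Γ} {x : X} :
    x ∈ compB β B C g ↔ ∃ a b, a * b = g ∧ x ∈ C b ∧ β b x ∈ B a := by
  constructor
  · intro hx
    rcases Set.mem_iUnion.1 hx with ⟨a, ha⟩
    rcases Set.mem_iUnion.1 ha with ⟨b, hb⟩
    rcases Set.mem_iUnion.1 hb with ⟨hab, hx'⟩
    exact ⟨a, b, hab, hx'.1, hx'.2⟩
  · rintro ⟨a, b, hab, h1, h2⟩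
    exact Set.mem_iUnion.2 ⟨a, Set.mem_iUnion.2 ⟨b, Set.mem_iUnion.2 ⟨hab, h1, h2⟩⟩⟩

lemma compB_isBisection (hact : IsAction Γ X β) {B C : Γ → Set X}
    (hB : IsOpenBisection β B) (hC : IsOpenBisection β C) :
    IsOpenBisection β (compB β B C) := by
  refine ⟨fun g => ?_, fun g h hgh => ?_, fun g h hgh => ?_⟩
  · exact isOpen_iUnion fun a => isOpen_iUnion fun b => isOpen_iUnion fun _ =>
      (hC.1 b).inter ((hB.1 a).preimage (β b).continuous)
  · rw [Set.disjoint_left]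
    intro x hx hx'
    rcases mem_compB.1 hx with ⟨a, b, hab, hxb, hxa⟩
    rcases mem_compB.1 hx' with ⟨a', b', hab', hxb', hxa'⟩
    rcases eq_or_ne b b' with rfl | hbb
    · have haa : a ≠ a' := by
        intro e; subst e; exact hgh (hab.symm.trans hab')
      exact (hB.2.1 a a' haa).le_bot ⟨hxa, hxa'⟩
    · exact (hC.2.1 b b' hbb).le_bot ⟨hxb, hxb'⟩
  · rw [Set.disjoint_left]
    intro y hy hy'
    rcases hy with ⟨x, hx, rfl⟩
    rcases hy' with ⟨x', hx', hee⟩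
    rcases mem_compB.1 hx with ⟨a, b, hab, hxb, hxa⟩
    rcases mem_compB.1 hx' with ⟨a', b', hab', hxb', hxa'⟩
    have e1 : β g x = β a (β b x) := by rw [← mul_apply hact, hab]
    have e2 : β h x' = β a' (β b' x') := by rw [← mul_apply hact, hab']
    rcases eq_or_ne a a' with rfl | haa
    · have hbb : b ≠ b' := by
        intro e; subst e; exact hgh (hab.symm.trans hab')
      have hbx : β b x = β b' x' := (β a).injective (by rw [← e1, ← e2, hee])
      refine Set.disjoint_left.1 (hC.2.2 b b' hbb) ⟨x, hxb, rfl⟩ ?_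
      rw [hbx]
      exact ⟨x', hxb', rfl⟩
    · have m1 : β g x ∈ β a '' B a := by rw [e1]; exact ⟨β b x, hxa, rfl⟩
      have m2 : β g x ∈ β a' '' B a' := by rw [← hee, e2]; exact ⟨β b' x', hxa', rfl⟩
      exact Set.disjoint_left.1 (hB.2.2 a a' haa) m1 m2

lemma source_compB_superset (hact : IsAction Γ X β) {B C : Γ → Set X}
    (h : bisectionRange β C ⊆ bisectionSource B) :
    bisectionSource C ⊆ bisectionSource (compB β B C) := by
  intro x hx
  rcases Set.mem_iUnion.1 hx with ⟨b, hb⟩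
  have : β b x ∈ bisectionRange β C := image_piece_subset_range C b ⟨x, hb, rfl⟩
  rcases Set.mem_iUnion.1 (h this) with ⟨a, ha⟩
  exact Set.mem_iUnion.2 ⟨a * b, mem_compB.2 ⟨a, b, rfl, hb, ha⟩⟩

/-- The image of a set under the partial map defined by a bisection. -/
def setImg (β : Γ → X ≃ₜ X) (B : Γ → Set X) (S : Set X) : Set X :=
  ⋃ g, β g '' (B g ∩ S)

lemma setImg_subset_range (B : Γ → Set X) (S : Set X) :
    setImg β B S ⊆ bisectionRange β B :=
  Set.iUnion_mono fun g => Set.image_mono Set.inter_subset_left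

lemma range_compB_subset_setImg (hact : IsAction Γ X β) (B C : Γ → Set X) :
    bisectionRange β (compB β B C) ⊆ setImg β B (bisectionRange β C) := by
  refine Set.iUnion_subset fun g => ?_
  rintro y ⟨x, hx, rfl⟩
  rcases mem_compB.1 hx with ⟨a, b, hab, hxb, hxa⟩
  refine Set.mem_iUnion.2 ⟨a, ⟨β b x, ⟨hxa, image_piece_subset_range C b ⟨x, hxb, rfl⟩⟩, ?_⟩⟩
  rw [← mul_apply hact, hab]

lemma range_compB_subset (hact : IsAction Γ X β) (B C : Γ → Set X) :
    bisectionRange β (compB β B C) ⊆ bisectionRange β B :=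
  (range_compB_subset_setImg hact B C).trans (setImg_subset_range B _)

lemma disjoint_setImg {B : Γ → Set X} (hB : IsOpenBisection β B) {S T : Set X}
    (hST : Disjoint S T) : Disjoint (setImg β B S) (setImg β B T) := by
  rw [Set.disjoint_left]
  intro y hy hy'
  rcases Set.mem_iUnion.1 hy with ⟨g, x, ⟨hxB, hxS⟩, rfl⟩
  rcases Set.mem_iUnion.1 hy' with ⟨h, x', ⟨hxB', hxT⟩, he⟩
  rcases eq_or_ne g h with rfl | hgh
  · have : x' = x := (β g).injective he
    subst this
    exact hST.le_bot ⟨hxS, hxT⟩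
  · exact Set.disjoint_left.1 (hB.2.2 g h hgh) ⟨x, hxB, rfl⟩ ⟨x', hxB', he⟩

lemma glue_isBisection {ι : Type*} (E : ι → Γ → Set X)
    (hE : ∀ j, IsOpenBisection β (E j))
    (hs : ∀ j j', j ≠ j' → Disjoint (bisectionSource (E j)) (bisectionSource (E j')))
    (hr : ∀ j j', j ≠ j' → Disjoint (bisectionRange β (E j)) (bisectionRange β (E j'))) :
    IsOpenBisection β (fun g => ⋃ j, E j g) := by
  refine ⟨fun g => isOpen_iUnion fun j => (hE j).1 g, fun g h hgh => ?_, fun g h hgh => ?_⟩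
  · rw [Set.disjoint_left]
    intro x hx hx'
    rcases Set.mem_iUnion.1 hx with ⟨j, hj⟩
    rcases Set.mem_iUnion.1 hx' with ⟨j', hj'⟩
    rcases eq_or_ne j j' with rfl | hjj
    · exact ((hE j).2.1 g h hgh).le_bot ⟨hj, hj'⟩
    · exact (hs j j' hjj).le_bot ⟨piece_subset_source _ g hj, piece_subset_source _ h hj'⟩
  · rw [Set.disjoint_left]
    intro y hy hy'
    rcases hy with ⟨x, hx, rfl⟩
    rcases hy' with ⟨x', hx', he⟩
    rcases Set.mem_iUnion.1 hx with ⟨j, hj⟩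
    rcases Set.mem_iUnion.1 hx' with ⟨j', hj'⟩
    rcases eq_or_ne j j' with rfl | hjj
    · exact Set.disjoint_left.1 ((hE j).2.2 g h hgh) ⟨x, hj, rfl⟩ ⟨x', hj', he⟩
    · exact Set.disjoint_left.1 (hr j j' hjj)
        (image_piece_subset_range _ g ⟨x, hj, rfl⟩)
        (image_piece_subset_range _ h ⟨x', hj', he⟩)

/-- Words in two compressing bisections: `2^m` bisections defined on `V` with pairwise
disjoint ranges inside `V`. -/
lemma word_family (hact : IsAction Γ X β) {V : Set X} (hV : IsOpen V)
    (B : Bool → Γ → Set X) (hB : ∀ b, IsOpenBisection β (B b))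
    (hrange : ∀ b, bisectionRange β (B b) ⊆ V)
    (hsource : ∀ b, V ⊆ bisectionSource (B b))
    (hd : ∀ b b', b ≠ b' → Disjoint (bisectionRange β (B b)) (bisectionRange β (B b')))
    (m : ℕ) :
    ∃ D : (Fin m → Bool) → Γ → Set X, ∀ w,
      IsOpenBisection β (D w) ∧ V ⊆ bisectionSource (D w) ∧
      bisectionRange β (D w) ⊆ V ∧
      ∀ w', w ≠ w' → Disjoint (bisectionRange β (D w)) (bisectionRange β (D w')) := by
  induction m with
  | zero =>
    refine ⟨fun _ => idB V, fun w => ⟨idB_isBisection hact hV, ?_, ?_, ?_⟩⟩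
    · rw [source_idB]
    · rw [range_idB hact]
    · intro w' hww
      exact absurd (funext fun i => i.elim0) hww
  | succ m ih =>
    rcases ih with ⟨D, hD⟩
    refine ⟨fun w => compB β (B (w 0)) (D (Fin.tail w)), fun w => ?_⟩
    obtain ⟨hDb, hDs, hDr, hDd⟩ := hD (Fin.tail w)
    refine ⟨compB_isBisection hact (hB (w 0)) hDb, ?_, ?_, ?_⟩
    · exact hDs.trans (source_compB_superset hact (hDr.trans (hsource (w 0))))
    · exact (range_compB_subset hact _ _).trans (hrange (w 0))
    · intro w' hww
      obtain ⟨hDb', hDs', hDr', _⟩ := hD (Fin.tail w')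
      rcases eq_or_ne (w 0) (w' 0) with he | hne
      · have htail : Fin.tail w ≠ Fin.tail w' := by
          intro e
          apply hww
          rw [← Fin.cons_self_tail w, ← Fin.cons_self_tail w', he, e]
        have h1 : bisectionRange β (compB β (B (w 0)) (D (Fin.tail w))) ⊆
            setImg β (B (w' 0)) (bisectionRange β (D (Fin.tail w))) := by
          rw [← he]
          exact range_compB_subset_setImg hact _ _
        have h2 := range_compB_subset_setImg hact (B (w' 0)) (D (Fin.tail w'))
        exact Set.disjoint_of_subset h1 h2 (disjoint_setImg (hB (w' 0)) (hDd _ htail))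
      · exact Set.disjoint_of_subset (range_compB_subset hact _ _)
          (range_compB_subset hact _ _) (hd _ _ hne)

end WFAux

end Aux

/-- **Filling from pure infiniteness.**  A minimal purely infinite action of a countable
group on a compact metrizable (infinite) space whose covering dimension is at most `n`
(expressed by the refinement condition below) has the weak `(n+1)`-filling property. -/
theorem weak_filling_of_purelyInfinite_minimal
    {Γ X : Type*} [Group Γ] [Countable Γ]
    [TopologicalSpace X] [CompactSpace X] [TopologicalSpace.MetrizableSpace X] [Infinite X]
    (β : Γ → X ≃ₜ X) (hact : IsAction Γ X β)
    (hmin : IsMinimalAction β) (hpi : IsPurelyInfiniteAction β) (n : ℕ)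
    (hdim : ∀ (ι : Type) [Fintype ι] (U : ι → Set X),
      (∀ i, IsOpen (U i)) → (⋃ i, U i) = univ →
      ∃ (J : Type) (_ : Fintype J) (Y : J → Set X) (c : J → Fin (n + 1)) (f : J → ι),
        (∀ j, IsOpen (Y j)) ∧ (⋃ j, Y j) = univ ∧ (∀ j, Y j ⊆ U (f j)) ∧
        ∀ j j' : J, j ≠ j' → c j = c j' → Disjoint (Y j) (Y j')) :
    HasWeakFilling β (n + 1) := by
  classical
  intro W hW hWne
  obtain ⟨V', hV'W, hV'o, hV'ne, B₁, B₂, hB₁, hB₂, hr₁, hs₁, hr₂, hs₂, hdis⟩ :=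
    hpi W hW hWne
  -- a finite family of translates of `V'` covering `X`
  have hcov : (Set.univ : Set X) ⊆ ⋃ g : Γ, β g ⁻¹' V' := by
    intro x _
    obtain ⟨y, hy, hyV⟩ := (hmin x).exists_mem_open hV'o hV'ne
    rcases hy with ⟨g, rfl⟩
    exact Set.mem_iUnion.2 ⟨g, hyV⟩
  obtain ⟨t, ht⟩ := isCompact_univ.elim_finite_subcover (fun g : Γ => β g ⁻¹' V')
    (fun g => hV'o.preimage (β g).continuous) hcov
  set idx : Fin t.card → Γ := fun i => (t.equivFin.symm i : Γ) with hidx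
  set U : Fin t.card → Set X := fun i => β (idx i) ⁻¹' V' with hUdef
  have hUo : ∀ i, IsOpen (U i) := fun i => hV'o.preimage (β (idx i)).continuous
  have hUcov : (⋃ i, U i) = Set.univ := by
    apply Set.univ_subset_iff.1
    intro x hx
    rcases Set.mem_iUnion₂.1 (ht (Set.mem_univ x)) with ⟨g, hg, hxg⟩
    refine Set.mem_iUnion.2 ⟨t.equivFin ⟨g, hg⟩, ?_⟩
    simpa [hUdef, hidx] using hxg
  -- dimension refinement
  obtain ⟨J, instJ, Y, c, f, hYo, hYcov, hYsub, hYdisj⟩ := hdim (Fin t.card) U hUo hUcov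
  haveI := instJ
  set m := Fintype.card J with hm
  set eJ : J ≃ Fin m := Fintype.equivFin J with heJ
  set wd : J → (Fin m → Bool) := fun j i => decide (eJ j = i) with hwd
  have hwdinj : Function.Injective wd := by
    intro j j' h
    have h1 := congrFun h (eJ j)
    simp only [hwd] at h1
    have h3 : eJ j' = eJ j := by
      have h4 : decide (eJ j' = eJ j) = true := by simpa using h1.symm
      exact of_decide_eq_true h4
    exact (eJ.injective h3).symm
  -- the two compressing bisections, indexed by Bool
  set BB : Bool → Γ → Set X := fun b => Bool.rec B₂ B₁ b with hBB
  have hBBb : ∀ b, IsOpenBisection β (BB b) := by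
    intro b; cases b
    · exact hB₂
    · exact hB₁
  have hBBr : ∀ b, bisectionRange β (BB b) ⊆ V' := by
    intro b; cases b
    · exact hr₂
    · exact hr₁
  have hBBs : ∀ b, V' ⊆ bisectionSource (BB b) := by
    intro b; cases b
    · exact hs₂
    · exact hs₁
  have hBBd : ∀ b b', b ≠ b' →
      Disjoint (bisectionRange β (BB b)) (bisectionRange β (BB b')) := by
    intro b b' hbb
    cases b <;> cases b'
    · exact absurd rfl hbb
    · exact hdis.symm
    · exact hdis
    · exact absurd rfl hbb
  obtain ⟨D, hD⟩ := WFAux.word_family hact hV'o BB hBBb hBBr hBBs hBBd m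
  -- one bisection per refinement piece
  set E : J → Γ → Set X := fun j =>
    WFAux.restrB β (WFAux.translB (idx (f j))⁻¹ (WFAux.invB β (D (wd j)))) (Y j) with hE
  have hEb : ∀ j, IsOpenBisection β (E j) := fun j =>
    WFAux.restrB_isBisection
      (WFAux.translB_isBisection hact _ (WFAux.invB_isBisection hact (hD (wd j)).1))
      (hYo j)
  have hEs : ∀ j, bisectionSource (E j) ⊆ bisectionRange β (D (wd j)) := by
    intro j
    refine (WFAux.source_restrB_subset _ _).trans ?_
    rw [WFAux.source_translB, WFAux.source_invB hact]
  have hEsW : ∀ j, bisectionSource (E j) ⊆ W := fun j =>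
    (hEs j).trans ((hD (wd j)).2.2.1.trans hV'W)
  have hYsub' : ∀ j, Y j ⊆ β (idx (f j))⁻¹ '' V' := by
    intro j x hx
    have h1 : β (idx (f j)) x ∈ V' := hYsub j hx
    exact ⟨β (idx (f j)) x, h1, WFAux.inv_apply_apply hact _ x⟩
  have hEr : ∀ j, bisectionRange β (E j) = Y j := by
    intro j
    rw [hE]
    rw [WFAux.range_restrB, WFAux.range_translB hact, WFAux.range_invB hact]
    apply le_antisymm Set.inter_subset_right
    intro x hx
    refine ⟨?_, hx⟩
    have h1 : x ∈ β (idx (f j))⁻¹ '' V' := hYsub' j hx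
    exact Set.image_mono (hD (wd j)).2.1 h1
  have hEdisj : ∀ j j', j ≠ j' →
      Disjoint (bisectionSource (E j)) (bisectionSource (E j')) := by
    intro j j' hjj
    exact Set.disjoint_of_subset (hEs j) (hEs j')
      ((hD (wd j)).2.2.2 (wd j') (fun e => hjj (hwdinj e)))
  -- glue the pieces of each colour
  refine ⟨fun i g => ⋃ j : {j : J // c j = i}, E j.1 g, fun i => ?_, ?_⟩
  · refine WFAux.glue_isBisection (fun j : {j : J // c j = i} => E j.1)
      (fun j => hEb j.1) (fun j j' hjj => hEdisj j.1 j'.1 (fun e => hjj (Subtype.ext e)))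
      (fun j j' hjj => ?_)
    rw [hEr j.1, hEr j'.1]
    exact hYdisj j.1 j'.1 (fun e => hjj (Subtype.ext e)) (j.2.trans j'.2.symm)
  · apply Set.univ_subset_iff.1
    intro x _
    have hx : x ∈ ⋃ j, Y j := hYcov ▸ Set.mem_univ x
    rcases Set.mem_iUnion.1 hx with ⟨j, hxY⟩
    have hx2 : x ∈ bisectionRange β (E j) := (hEr j).symm ▸ hxY
    rcases Set.mem_iUnion.1 hx2 with ⟨g, z, hz, rfl⟩
    refine Set.mem_iUnion.2 ⟨c j, Set.mem_iUnion.2 ⟨g, ?_⟩⟩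
    exact ⟨z, ⟨Set.mem_iUnion.2 ⟨⟨j, rfl⟩, hz⟩,
      hEsW j (WFAux.piece_subset_source (E j) g hz)⟩, rfl⟩
end

section
/- Let β be an action of a countable group Γ on a compact metrizable space X, let U ⊆ X be a nonempty open set, and suppose there exist open β-bisections B¹, B² with r(Bⁱ) ⊆ U ⊆ s(Bⁱ) for i = 1,2 and r(B¹) ∩ r(B²) = ∅. Then for every N ∈ ℕ there exist N open β-bisections V¹,…,V^N with r(Vⁱ) ⊆ U ⊆ s(Vⁱ) for each i and with the ranges r(V¹),…,r(V^N) pairwise disjoint. -/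
open Set Filter Topology Pointwise

section BcompAux

variable {Γ X : Type*} [Group Γ] [TopologicalSpace X]

/-- Composition of two bisections: apply `W` first, then `V`. -/
def bcomp (β : Γ → X ≃ₜ X) (V W : Γ → Set X) : Γ → Set X :=
  fun g => ⋃ h : Γ, W h ∩ (β h) ⁻¹' (V (g * h⁻¹))

lemma isAction_apply_mul {β : Γ → X ≃ₜ X} (hact : IsAction Γ X β) (g h : Γ) (x : X) :
    β (g * h) x = β g (β h x) := by
  rw [hact g h]; rfl

lemma mem_bisectionRange_bcomp {β : Γ → X ≃ₜ X} (hact : IsAction Γ X β)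
    (V W : Γ → Set X) (y : X) :
    y ∈ bisectionRange β (bcomp β V W) ↔
      ∃ k z, z ∈ V k ∧ z ∈ bisectionRange β W ∧ β k z = y := by
  constructor
  · intro hy
    simp only [bisectionRange, mem_iUnion, mem_image, bcomp, mem_inter_iff,
      mem_preimage] at hy
    obtain ⟨g, x, ⟨h, hxW, hxV⟩, hxy⟩ := hy
    refine ⟨g * h⁻¹, β h x, hxV, ?_, ?_⟩
    · exact mem_iUnion.2 ⟨h, mem_image_of_mem _ hxW⟩
    · rw [← isAction_apply_mul hact (g * h⁻¹) h x, inv_mul_cancel_right]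
      exact hxy
  · rintro ⟨k, z, hzV, hzW, rfl⟩
    simp only [bisectionRange, mem_iUnion, mem_image] at hzW
    obtain ⟨h, x, hxW, rfl⟩ := hzW
    simp only [bisectionRange, mem_iUnion, mem_image, bcomp, mem_inter_iff, mem_preimage]
    refine ⟨k * h, x, ⟨h, hxW, by simpa [mul_inv_cancel_right] using hzV⟩, ?_⟩
    rw [isAction_apply_mul hact k h x]

lemma bisectionRange_bcomp_subset {β : Γ → X ≃ₜ X} (hact : IsAction Γ X β)
    (V W : Γ → Set X) :
    bisectionRange β (bcomp β V W) ⊆ bisectionRange β V := by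
  intro y hy
  obtain ⟨k, z, hzV, _, rfl⟩ := (mem_bisectionRange_bcomp hact V W y).1 hy
  exact mem_iUnion.2 ⟨k, mem_image_of_mem _ hzV⟩

lemma isOpenBisection_bcomp {β : Γ → X ≃ₜ X} (hact : IsAction Γ X β)
    {V W : Γ → Set X} (hV : IsOpenBisection β V) (hW : IsOpenBisection β W) :
    IsOpenBisection β (bcomp β V W) := by
  refine ⟨fun g => isOpen_iUnion fun h => (hW.1 h).inter
    ((β h).isOpen_preimage.2 (hV.1 _)), ?_, ?_⟩
  · intro g g' hgg'
    rw [Set.disjoint_left]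
    rintro x hx hx'
    simp only [bcomp, mem_iUnion, mem_inter_iff, mem_preimage] at hx hx'
    obtain ⟨h, hxW, hxV⟩ := hx
    obtain ⟨h', hxW', hxV'⟩ := hx'
    rcases eq_or_ne h h' with rfl | hne
    · have : g * h⁻¹ ≠ g' * h⁻¹ := fun e => hgg' (mul_right_cancel e)
      exact Set.disjoint_left.mp (hV.2.1 _ _ this) hxV hxV'
    · exact Set.disjoint_left.mp (hW.2.1 _ _ hne) hxW hxW'
  · intro g g' hgg'
    rw [Set.disjoint_left]
    rintro y hy hy'
    simp only [mem_image, bcomp, mem_iUnion, mem_inter_iff, mem_preimage] at hy hy'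
    obtain ⟨x, ⟨h, hxW, hxV⟩, rfl⟩ := hy
    obtain ⟨x', ⟨h', hxW', hxV'⟩, hxy'⟩ := hy'
    have e1 : β g x = β (g * h⁻¹) (β h x) := by
      rw [← isAction_apply_mul hact, inv_mul_cancel_right]
    have e2 : β g' x' = β (g' * h'⁻¹) (β h' x') := by
      rw [← isAction_apply_mul hact, inv_mul_cancel_right]
    rcases eq_or_ne (g * h⁻¹) (g' * h'⁻¹) with heq | hne
    · have hh : h ≠ h' := by
        rintro rfl
        exact hgg' (mul_right_cancel (b := h⁻¹) heq)
      have : β h x = β h' x' := by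
        apply (β (g * h⁻¹)).injective
        rw [← e1, heq, ← e2, hxy']
      refine Set.disjoint_left.mp (hW.2.2 _ _ hh) ⟨x, hxW, rfl⟩ ⟨x', hxW', this.symm⟩
    · refine Set.disjoint_left.mp (hV.2.2 _ _ hne) ⟨β h x, hxV, e1.symm⟩
        ⟨β h' x', hxV', ?_⟩
      rw [← e2, hxy']

lemma subset_bisectionSource_bcomp {β : Γ → X ≃ₜ X} {V W : Γ → Set X} {U : Set X}
    (hWs : U ⊆ bisectionSource W) (hWr : bisectionRange β W ⊆ bisectionSource V) :
    U ⊆ bisectionSource (bcomp β V W) := by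
  intro x hx
  obtain ⟨_, ⟨h, rfl⟩, hxW⟩ := hWs hx
  have hr : β h x ∈ bisectionRange β W := mem_iUnion.2 ⟨h, mem_image_of_mem _ hxW⟩
  obtain ⟨_, ⟨k, rfl⟩, hk⟩ := hWr hr
  refine mem_iUnion.2 ⟨k * h, mem_iUnion.2 ⟨h, hxW, ?_⟩⟩
  simpa [mul_inv_cancel_right] using hk

lemma disjoint_bisectionRange_bcomp {β : Γ → X ≃ₜ X} (hact : IsAction Γ X β)
    {V W₁ W₂ : Γ → Set X} (hV : IsOpenBisection β V)
    (hd : Disjoint (bisectionRange β W₁) (bisectionRange β W₂)) :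
    Disjoint (bisectionRange β (bcomp β V W₁)) (bisectionRange β (bcomp β V W₂)) := by
  rw [Set.disjoint_left]
  intro y h1 h2
  rw [mem_bisectionRange_bcomp hact] at h1 h2
  obtain ⟨k, z, hzV, hzW, rfl⟩ := h1
  obtain ⟨k', z', hzV', hzW', heq⟩ := h2
  rcases eq_or_ne k k' with rfl | hne
  · have : z' = z := (β k).injective heq
    subst this
    exact Set.disjoint_left.mp hd hzW hzW'
  · exact Set.disjoint_left.mp (hV.2.2 k k' hne) ⟨z, hzV, rfl⟩ ⟨z', hzV', heq⟩

end BcompAux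

/-- **Doubling lemma.**  If a nonempty open set `U` admits two open `β`-bisections with
disjoint ranges contained in `U` and sources containing `U`, then for every `N` there are
`N` open `β`-bisections with pairwise disjoint ranges contained in `U` and sources
containing `U`. -/
theorem exists_many_disjoint_bisections
    {Γ X : Type*} [Group Γ] [Countable Γ]
    [TopologicalSpace X] [CompactSpace X] [TopologicalSpace.MetrizableSpace X]
    (β : Γ → X ≃ₜ X) (hact : IsAction Γ X β)
    (U : Set X) (hU : IsOpen U) (hUne : U.Nonempty)
    (B₁ B₂ : Γ → Set X) (h₁ : IsOpenBisection β B₁) (h₂ : IsOpenBisection β B₂)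
    (hr₁ : bisectionRange β B₁ ⊆ U) (hs₁ : U ⊆ bisectionSource B₁)
    (hr₂ : bisectionRange β B₂ ⊆ U) (hs₂ : U ⊆ bisectionSource B₂)
    (hdisj : Disjoint (bisectionRange β B₁) (bisectionRange β B₂)) (N : ℕ) :
    ∃ V : Fin N → Γ → Set X,
      (∀ i, IsOpenBisection β (V i)) ∧
      (∀ i, bisectionRange β (V i) ⊆ U) ∧
      (∀ i, U ⊆ bisectionSource (V i)) ∧
      ∀ i j : Fin N, i ≠ j → Disjoint (bisectionRange β (V i)) (bisectionRange β (V j)) := by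
  have key : ∀ k : ℕ, ∃ V : Fin (2 ^ k) → Γ → Set X,
      (∀ i, IsOpenBisection β (V i)) ∧
      (∀ i, bisectionRange β (V i) ⊆ U) ∧
      (∀ i, U ⊆ bisectionSource (V i)) ∧
      ∀ i j, i ≠ j → Disjoint (bisectionRange β (V i)) (bisectionRange β (V j)) := by
    intro k
    induction k with
    | zero =>
      refine ⟨fun _ => B₁, fun _ => h₁, fun _ => hr₁, fun _ => hs₁,
        fun i j hij => absurd (Fin.ext ?_) hij⟩
      have hi := i.isLt
      have hj := j.isLt
      simp only [pow_zero] at hi hj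
      omega
    | succ k ih =>
      obtain ⟨V, hVb, hVr, hVs, hVd⟩ := ih
      have hpow : 2 ^ (k + 1) = 2 ^ k + 2 ^ k := by ring
      let e : Fin (2 ^ (k + 1)) ≃ Fin (2 ^ k) ⊕ Fin (2 ^ k) :=
        (finCongr hpow).trans finSumFinEquiv.symm
      refine ⟨fun i => Sum.elim (fun a => bcomp β (V a) B₁)
        (fun a => bcomp β (V a) B₂) (e i), ?_, ?_, ?_, ?_⟩
      · intro i
        rcases hi : e i with a | a <;> simp only [hi, Sum.elim_inl, Sum.elim_inr]
        · exact isOpenBisection_bcomp hact (hVb a) h₁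
        · exact isOpenBisection_bcomp hact (hVb a) h₂
      · intro i
        rcases hi : e i with a | a <;> simp only [hi, Sum.elim_inl, Sum.elim_inr]
        · exact (bisectionRange_bcomp_subset hact _ _).trans (hVr a)
        · exact (bisectionRange_bcomp_subset hact _ _).trans (hVr a)
      · intro i
        rcases hi : e i with a | a <;> simp only [hi, Sum.elim_inl, Sum.elim_inr]
        · exact subset_bisectionSource_bcomp hs₁ (hr₁.trans (hVs a))
        · exact subset_bisectionSource_bcomp hs₂ (hr₂.trans (hVs a))
      · intro i j hij
        have hij' : e i ≠ e j := fun h => hij (e.injective h)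
        rcases hi : e i with a | a <;> rcases hj : e j with b | b <;>
          rw [hi, hj] at hij' <;>
          simp only [hi, hj, Sum.elim_inl, Sum.elim_inr]
        · have hab : a ≠ b := fun h => hij' (by rw [h])
          exact ((hVd a b hab).mono (bisectionRange_bcomp_subset hact _ _)
            (bisectionRange_bcomp_subset hact _ _))
        · rcases eq_or_ne a b with rfl | hab
          · exact disjoint_bisectionRange_bcomp hact (hVb a) hdisj
          · exact ((hVd a b hab).mono (bisectionRange_bcomp_subset hact _ _)
              (bisectionRange_bcomp_subset hact _ _))
        · rcases eq_or_ne a b with rfl | hab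
          · exact (disjoint_bisectionRange_bcomp hact (hVb a) hdisj).symm
          · exact ((hVd a b hab).mono (bisectionRange_bcomp_subset hact _ _)
              (bisectionRange_bcomp_subset hact _ _))
        · have hab : a ≠ b := fun h => hij' (by rw [h])
          exact ((hVd a b hab).mono (bisectionRange_bcomp_subset hact _ _)
            (bisectionRange_bcomp_subset hact _ _))
  obtain ⟨V, hVb, hVr, hVs, hVd⟩ := key N
  have hle : N ≤ 2 ^ N := Nat.le_of_lt (Nat.lt_two_pow_self (n := N))
  refine ⟨fun i => V (Fin.castLE hle i), fun i => hVb _, fun i => hVr _,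
    fun i => hVs _, fun i j hij => hVd _ _ fun h => hij (Fin.castLE_injective hle h)⟩
end

section
/- Let β be an action of a countable group Γ on a compact metrizable space X having the weak n-filling property for some n ∈ ℕ. Then β is minimal, i.e., every β-orbit is dense in X. -/
open Set Filter Topology Pointwise

/-- The weak `n`-filling property implies minimality: every orbit is dense. -/
theorem minimal_of_hasWeakFilling
    {Γ X : Type*} [Group Γ] [Countable Γ]
    [TopologicalSpace X] [CompactSpace X] [TopologicalSpace.MetrizableSpace X]
    (β : Γ → X ≃ₜ X) (hact : IsAction Γ X β)
    (n : ℕ) (hfill : HasWeakFilling β n) :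
    IsMinimalAction β := by
  intro x
  rw [dense_iff_inter_open]
  intro U hU hUne
  obtain ⟨V, hVb, hcov⟩ := hfill U hU hUne
  have hx : x ∈ ⋃ i, bisectionRangeOn β (V i) U := hcov ▸ mem_univ x
  simp only [bisectionRangeOn, mem_iUnion, mem_image] at hx
  obtain ⟨i, g, y, ⟨hyV, hyU⟩, hxy⟩ := hx
  have h1 : ∀ z : X, β 1 z = z := by
    intro z
    have h := hact 1 1
    rw [one_mul] at h
    have h2 := congrArg (fun e : X ≃ₜ X => e z) h
    simp only [Homeomorph.trans_apply] at h2
    exact ((β 1).injective h2).symm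
  refine ⟨y, ⟨hyU, g⁻¹, ?_⟩⟩
  have h2 : β (g⁻¹ * g) y = β g⁻¹ (β g y) := by rw [hact]; rfl
  show β g⁻¹ x = y
  rw [← hxy, ← h2, inv_mul_cancel, h1]
end

section
/- Let Γ be a countable group acting on a compact metric space X, let U ⊆ X be a nonempty open set, and let N ∈ ℕ. Then the set F_U := {β ∈ H(Γ,X) : there exist N open β-bisections V¹,…,V^N with ∪_{i=1}^N r(Vⁱ U) = X} is open in H(Γ,X). -/
open Set Filter Topology Pointwise

section AuxLemmas

variable {X : Type*} [MetricSpace X] [CompactSpace X]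

lemma dist_le_homeoDist (φ ψ : X ≃ₜ X) (x : X) :
    dist (φ x) (ψ x) ≤ homeoDist φ ψ := by
  have hb : BddAbove (range fun x => dist (φ x) (ψ x)) := by
    have hc : IsCompact ((fun x => dist (φ x) (ψ x)) '' univ) :=
      isCompact_univ.image (φ.continuous.dist ψ.continuous)
    simpa [image_univ] using hc.bddAbove
  calc dist (φ x) (ψ x) ≤ ⨆ x, dist (φ x) (ψ x) := le_ciSup hb x
    _ ≤ homeoDist φ ψ := le_add_of_nonneg_right (Real.iSup_nonneg fun _ => dist_nonneg)

lemma homeoDist_self (φ : X ≃ₜ X) : homeoDist φ φ = 0 := by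
  have h1 : (⨆ x : X, dist (φ x) (φ x)) = 0 := by
    simp [Real.iSup_const_zero]
  have h2 : (⨆ x : X, dist (φ.symm x) (φ.symm x)) = 0 := by
    simp [Real.iSup_const_zero]
  simp [homeoDist, h1, h2]

lemma isOpen_homeoDist_ball (φ : X ≃ₜ X) (ε : ℝ) :
    IsOpen {ψ : X ≃ₜ X | homeoDist φ ψ < ε} :=
  TopologicalSpace.isOpen_generateFrom_of_mem ⟨φ, ε, rfl⟩

end AuxLemmas

open Metric

/-- For a nonempty open `U ⊆ X` and `N ∈ ℕ`, the set
`F_U = {β ∈ H(Γ,X) : ∃ N open β-bisections V¹,…,V^N with ∪ᵢ r(Vⁱ U) = X}` is open in the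
space of actions `H(Γ, X)`. -/
theorem isOpen_F_U
    {Γ X : Type*} [Group Γ] [Countable Γ] [MetricSpace X] [CompactSpace X]
    (U : Set X) (hU : IsOpen U) (hUne : U.Nonempty) (N : ℕ) :
    IsOpen {β : ActionSpace Γ X |
      ∃ V : Fin N → Γ → Set X, (∀ i, IsOpenBisection β.1 (V i)) ∧
        (⋃ i, bisectionRangeOn β.1 (V i) U) = univ} := by
  classical
  rw [isOpen_iff_forall_mem_open]
  rintro β ⟨V, hbis, hcov⟩
  set f : Fin N × Γ → Set X := fun p => β.1 p.2 '' (V p.1 p.2 ∩ U) with hf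
  have fopen : ∀ p, IsOpen (f p) :=
    fun p => (β.1 p.2).isOpenMap _ (((hbis p.1).1 p.2).inter hU)
  have fcov : (univ : Set X) ⊆ ⋃ p, f p:= by
    intro x _
    have hx : x ∈ ⋃ i, bisectionRangeOn β.1 (V i) U := by rw [hcov]; trivial
    obtain ⟨i, hi⟩ := mem_iUnion.1 hx
    obtain ⟨g, hg⟩ := mem_iUnion.1 hi
    exact mem_iUnion.2 ⟨(i, g), hg⟩
  obtain ⟨T, hT⟩ := isCompact_univ.elim_finite_subcover f fopen fcov
  set ι := {p : Fin N × Γ // p ∈ T}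
  have hTcov : (univ : Set X) ⊆ ⋃ p : ι, f p.1 := by
    intro x hx
    obtain ⟨p, hp⟩ := mem_iUnion.1 (hT hx)
    obtain ⟨hpT, hxp⟩ := mem_iUnion.1 hp
    exact mem_iUnion.2 ⟨⟨p, hpT⟩, hxp⟩
  obtain ⟨w, hwcov, hwopen, hwsub⟩ := exists_subset_iUnion_closure_subset isClosed_univ
    (fun p : ι => fopen p.1) (fun x _ => Set.toFinite _) hTcov
  -- closures are disjoint for distinct group elements with the same bisection index
  have hclos : ∀ p q : ι, p.1.1 = q.1.1 → p.1.2 ≠ q.1.2 →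
      Disjoint (closure (w p)) (closure (w q)) := by
    intro p q h1 h2
    have hsub1 : closure (w p) ⊆ β.1 p.1.2 '' V p.1.1 p.1.2 :=
      (hwsub p).trans ((image_mono inter_subset_left))
    have hsub2 : closure (w q) ⊆ β.1 q.1.2 '' V p.1.1 q.1.2 := by
      rw [h1]; exact (hwsub q).trans ((image_mono inter_subset_left))
    have hdisj : Disjoint (β.1 p.1.2 '' V p.1.1 p.1.2) (β.1 q.1.2 '' V p.1.1 q.1.2) :=
      (hbis p.1.1).2.2 p.1.2 q.1.2 h2
    exact hdisj.mono hsub1 hsub2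
  have hd : ∀ p q : ι, ∃ δ, 0 < δ ∧ (p.1.1 = q.1.1 → p.1.2 ≠ q.1.2 →
      Disjoint (thickening δ (closure (w p))) (thickening δ (closure (w q)))) := by
    intro p q
    by_cases h : p.1.1 = q.1.1 ∧ p.1.2 ≠ q.1.2
    · obtain ⟨δ, hδ, hdisj⟩ := (hclos p q h.1 h.2).exists_thickenings
        isClosed_closure.isCompact isClosed_closure
      exact ⟨δ, hδ, fun _ _ => hdisj⟩
    · exact ⟨1, one_pos, fun h1 h2 => absurd ⟨h1, h2⟩ h⟩
  choose d dpos ddisj using hd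
  -- Lebesgue number
  obtain ⟨η, ηpos, hη⟩ := lebesgue_number_lemma_of_metric isCompact_univ hwopen hwcov
  -- ε : minimum of η and all the δ's
  set s₀ : Finset ℝ := insert η ((Finset.univ : Finset (ι × ι)).image fun pq => d pq.1 pq.2)
    with hs₀
  have hs₀ne : s₀.Nonempty := ⟨η, Finset.mem_insert_self _ _⟩
  set ε := s₀.min' hs₀ne with hε
  have εpos : 0 < ε := by
    rw [hε, Finset.lt_min'_iff]
    intro b hb
    rcases Finset.mem_insert.1 hb with h | h
    · exact h ▸ ηpos
    · obtain ⟨pq, _, rfl⟩ := Finset.mem_image.1 h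
      exact dpos pq.1 pq.2
  have hεη : ε ≤ η := Finset.min'_le _ _ (Finset.mem_insert_self _ _)
  have hεd : ∀ p q : ι, ε ≤ d p q := fun p q =>
    Finset.min'_le _ _ (Finset.mem_insert_of_mem (Finset.mem_image.2 ⟨(p, q),
      Finset.mem_univ _, rfl⟩))
  -- the neighborhood
  refine ⟨⋂ p ∈ T, {β' : ActionSpace Γ X | homeoDist (β.1 p.2) (β'.1 p.2) < ε}, ?_, ?_, ?_⟩
  · -- neighborhood is contained in the set
    intro β' hβ'
    have hclose : ∀ p ∈ T, ∀ z : X, dist (β'.1 p.2 z) (β.1 p.2 z) < ε := by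
      intro p hp z
      have h1 : homeoDist (β.1 p.2) (β'.1 p.2) < ε := by
        have := mem_iInter₂.1 hβ' p hp
        exact this
      calc dist (β'.1 p.2 z) (β.1 p.2 z) = dist (β.1 p.2 z) (β'.1 p.2 z) := dist_comm _ _
        _ ≤ homeoDist (β.1 p.2) (β'.1 p.2) := dist_le_homeoDist _ _ _
        _ < ε := h1
    -- shrunk bisections
    set W : Fin N → Γ → Set X := fun i g =>
      if h : (i, g) ∈ T then (β.1 g).symm '' w ⟨(i, g), h⟩ else ∅ with hW
    have hWsub : ∀ i g, W i g ⊆ V i g ∩ U := by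
      intro i g x hx
      simp only [hW] at hx
      split_ifs at hx with h
      · obtain ⟨y, hy, rfl⟩ := hx
        have : y ∈ f (i, g) := (hwsub ⟨(i, g), h⟩) (subset_closure hy)
        obtain ⟨z, hz, rfl⟩ := this
        simpa using hz
      · exact absurd hx (notMem_empty x)
    have hWmem : ∀ (p : ι) (x : X), x ∈ (β.1 p.1.2).symm '' w p → β.1 p.1.2 x ∈ w p := by
      rintro p x ⟨y, hy, rfl⟩
      simpa using hy
    -- images under β' lie in thickenings
    have hthick : ∀ (p : ι) (x : X), x ∈ W p.1.1 p.1.2 → ∀ δ, ε ≤ δ →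
        β'.1 p.1.2 x ∈ thickening δ (closure (w p)) := by
      intro p x hx δ hδ
      have hxw : β.1 p.1.2 x ∈ w p := by
        simp only [hW, dif_pos p.2] at hx
        exact hWmem p x hx
      refine mem_thickening_iff.2 ⟨β.1 p.1.2 x, subset_closure hxw, ?_⟩
      exact lt_of_lt_of_le (hclose p.1 p.2 x) hδ
    refine ⟨W, fun i => ⟨?_, ?_, ?_⟩, ?_⟩
    · -- open
      intro g
      simp only [hW]
      split_ifs with h
      · exact (β.1 g).symm.isOpenMap _ (hwopen _)
      · exact isOpen_empty
    · -- sources disjoint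
      intro g h hgh
      exact ((hbis i).2.1 g h hgh).mono ((hWsub i g).trans inter_subset_left)
        ((hWsub i h).trans inter_subset_left)
    · -- ranges disjoint
      intro g h hgh
      by_cases hg : (i, g) ∈ T
      · by_cases hh : (i, h) ∈ T
        · set p : ι := ⟨(i, g), hg⟩
          set q : ι := ⟨(i, h), hh⟩
          have h1 : β'.1 g '' W i g ⊆ thickening (d p q) (closure (w p)) := by
            rintro x ⟨y, hy, rfl⟩
            exact hthick p y hy (d p q) (hεd p q)
          have h2 : β'.1 h '' W i h ⊆ thickening (d p q) (closure (w q)) := by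
            rintro x ⟨y, hy, rfl⟩
            exact hthick q y hy (d p q) (hεd p q)
          exact (ddisj p q rfl hgh).mono h1 h2
        · have : W i h = ∅ := by simp only [hW]; exact dif_neg hh
          simp [this]
      · have : W i g = ∅ := by simp only [hW]; exact dif_neg hg
        simp [this]
    · -- covering
      apply eq_univ_of_forall
      intro x
      obtain ⟨p, hp⟩ := hη x trivial
      obtain ⟨⟨i, g⟩, hpT⟩ := p
      set y := (β'.1 g).symm x with hy
      have hxy : β'.1 g y = x := (β'.1 g).apply_symm_apply x
      have h1 : dist (β.1 g y) x < η := by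
        calc dist (β.1 g y) x = dist (β'.1 g y) (β.1 g y) := by
              rw [hxy, dist_comm]
          _ < ε := hclose (i, g) hpT y
          _ ≤ η := hεη
      have h2 : β.1 g y ∈ w ⟨(i, g), hpT⟩ := hp (mem_ball.2 h1)
      have h3 : y ∈ W i g := by
        simp only [hW, dif_pos hpT]
        exact ⟨β.1 g y, h2, (β.1 g).symm_apply_apply y⟩
      have h4 : y ∈ U := ((hWsub i g) h3).2
      refine mem_iUnion.2 ⟨i, mem_iUnion.2 ⟨g, ⟨y, ⟨h3, h4⟩, hxy⟩⟩⟩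
  · -- openness of the neighborhood
    refine Set.Finite.isOpen_biInter (T.finite_toSet) fun p _ => ?_
    have hc : Continuous fun β' : ActionSpace Γ X => β'.1 p.2 :=
      (continuous_apply p.2).comp continuous_subtype_val
    exact (isOpen_homeoDist_ball (β.1 p.2) ε).preimage hc
  · -- β belongs to the neighborhood
    refine mem_iInter₂.2 fun p _ => ?_
    show homeoDist (β.1 p.2) (β.1 p.2) < ε
    rw [homeoDist_self]
    exact εpos
end

section
/- Let M be a nonempty connected closed topological n-manifold. Then there exists N ∈ ℕ such that for every nonempty open set V ⊆ M there exist homeomorphisms h_1,…,h_N of M, each isotopic to the identity, with ∪_{i=1}^N h_i(V) = M. (In other words, the action of the identity path component H_0(M) of the homeomorphism group of M on M has the finite filling property.) -/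
open Set Topology

open unitInterval in
/-- A homeomorphism `h` of a space `M` is isotopic to the identity if there is a continuous
map `F : [0,1] × M → M` such that each `F(t, ·)` is a homeomorphism of `M`, `F(0, ·) = id`
and `F(1, ·) = h`. -/
def IsotopicToId {M : Type*} [TopologicalSpace M] (h : M ≃ₜ M) : Prop :=
  ∃ F : I × M → M, Continuous F ∧
    (∀ t : I, ∃ e : M ≃ₜ M, (⇑e : M → M) = fun x => F (t, x)) ∧
    (∀ x : M, F (0, x) = x) ∧ (∀ x : M, F (1, x) = h x)

section Auxiliary

open Metric unitInterval
open scoped Classical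

set_option linter.unusedSectionVars false

theorem isotopicToId_refl {M : Type*} [TopologicalSpace M] :
    IsotopicToId (Homeomorph.refl M) :=
  ⟨fun p => p.2, continuous_snd, fun _ => ⟨Homeomorph.refl M, rfl⟩, fun _ => rfl, fun _ => rfl⟩

theorem isotopicToId_trans {M : Type*} [TopologicalSpace M] {h1 h2 : M ≃ₜ M}
    (H1 : IsotopicToId h1) (H2 : IsotopicToId h2) : IsotopicToId (h1.trans h2) := by
  obtain ⟨F1, hc1, hs1, h01, h11⟩ := H1
  obtain ⟨F2, hc2, hs2, h02, h12⟩ := H2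
  refine ⟨fun p => F2 (p.1, F1 p), hc2.comp (continuous_fst.prodMk hc1), ?_, ?_, ?_⟩
  · intro t
    obtain ⟨e1, he1⟩ := hs1 t
    obtain ⟨e2, he2⟩ := hs2 t
    refine ⟨e1.trans e2, ?_⟩
    funext x
    show e2 (e1 x) = F2 (t, F1 (t, x))
    rw [he1, he2]
  · intro x
    show F2 (0, F1 (0, x)) = x
    rw [h01 x, h02 x]
  · intro x
    show F2 (1, F1 (1, x)) = h2 (h1 x)
    rw [h11 x, h12 (h1 x)]


/-- Bump: `1` on `[0,1]`, `0` on `[3,∞)`, `1/2`-Lipschitz. -/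
noncomputable def lamB (r : ℝ) : ℝ := min 1 (max 0 ((3 - r) / 2))

lemma lamB_nonneg (r : ℝ) : 0 ≤ lamB r :=
  le_min (by norm_num) (le_max_left _ _)

lemma lamB_le_one (r : ℝ) : lamB r ≤ 1 := min_le_left _ _

lemma lamB_of_le_one {r : ℝ} (h : r ≤ 1) : lamB r = 1 := by
  unfold lamB
  rw [max_eq_right (by linarith), min_eq_left (by linarith)]

lemma lamB_of_ge {r : ℝ} (h : 3 ≤ r) : lamB r = 0 := by
  unfold lamB
  rw [max_eq_left (by linarith), min_eq_right (by norm_num)]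

lemma lamB_lip (a b : ℝ) : |lamB a - lamB b| ≤ (1 / 2) * |a - b| := by
  have h2 : |max 0 ((3 - a)/2) - max 0 ((3 - b)/2)| ≤ |(3 - a)/2 - (3 - b)/2| := by
    have := abs_max_sub_max_le_max (0:ℝ) ((3 - a)/2) 0 ((3 - b)/2)
    simpa using this
  have h1 : |lamB a - lamB b| ≤ |max 0 ((3 - a)/2) - max 0 ((3 - b)/2)| := by
    have := abs_min_sub_min_le_max (1:ℝ) (max 0 ((3 - a)/2)) 1 (max 0 ((3 - b)/2))
    simpa [lamB] using this
  refine (h1.trans h2).trans ?_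
  rw [show (3 - a) / 2 - (3 - b) / 2 = (b - a) / 2 by ring, abs_div, abs_sub_comm,
    abs_of_pos (by norm_num : (0:ℝ) < 2)]
  linarith


variable {n : ℕ}

lemma exists_pert_homeo (g : (Fin n → ℝ) → (Fin n → ℝ)) (c : NNReal) (hc : c < 1)
    (hg : LipschitzWith c g) :
    ∃ e : (Fin n → ℝ) ≃ₜ (Fin n → ℝ), ⇑e = fun z => z + g z := by
  have happ : ApproximatesLinearOn (fun z => z + g z)
      ((ContinuousLinearEquiv.refl ℝ (Fin n → ℝ)) : (Fin n → ℝ) →L[ℝ] (Fin n → ℝ)) univ c := by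
    intro x _ y _
    have := hg.dist_le_mul x y
    simp only [dist_eq_norm] at this
    simpa [add_sub_add_comm] using this
  have hc' : Subsingleton (Fin n → ℝ) ∨ c < ‖(((ContinuousLinearEquiv.refl ℝ (Fin n → ℝ)).symm :
      (Fin n → ℝ) ≃L[ℝ] (Fin n → ℝ)) : (Fin n → ℝ) →L[ℝ] (Fin n → ℝ))‖₊⁻¹ := by
    rcases subsingleton_or_nontrivial (Fin n → ℝ) with h | h
    · exact Or.inl h
    · refine Or.inr ?_
      simpa [show (((ContinuousLinearEquiv.refl ℝ (Fin n → ℝ)).symm :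
          (Fin n → ℝ) ≃L[ℝ] (Fin n → ℝ)) : (Fin n → ℝ) →L[ℝ] (Fin n → ℝ))
          = ContinuousLinearMap.id ℝ (Fin n → ℝ) from rfl,
        ContinuousLinearMap.nnnorm_id] using hc
  exact ⟨happ.toHomeomorph _ hc', rfl⟩



variable {n : ℕ}

lemma lip_translate (v : Fin n → ℝ) (hv : ‖v‖ ≤ 1) :
    LipschitzWith (1/2) (fun z : Fin n → ℝ => lamB ‖z‖ • v) := by
  refine LipschitzWith.of_dist_le_mul fun x y => ?_
  rw [dist_eq_norm, dist_eq_norm, ← sub_smul, norm_smul]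
  have h1 : |lamB ‖x‖ - lamB ‖y‖| ≤ (1/2) * ‖x - y‖ :=
    (lamB_lip _ _).trans (by
      have := abs_norm_sub_norm_le x y
      nlinarith [abs_nonneg (‖x‖ - ‖y‖)])
  have : ‖lamB ‖x‖ - lamB ‖y‖‖ * ‖v‖ ≤ (1/2) * ‖x - y‖ * 1 := by
    apply mul_le_mul _ hv (norm_nonneg v) (by positivity)
    simpa [Real.norm_eq_abs] using h1
  push_cast
  linarith

lemma lamB_smul_est_aux (x y : Fin n → ℝ) (hyx : ‖y‖ ≤ ‖x‖) :
    ‖lamB ‖x‖ • x - lamB ‖y‖ • y‖ ≤ (5/2) * ‖x - y‖ := by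
  have hdecomp : lamB ‖x‖ • x - lamB ‖y‖ • y
      = lamB ‖x‖ • (x - y) + (lamB ‖x‖ - lamB ‖y‖) • y := by
    rw [smul_sub, sub_smul]; abel
  rw [hdecomp]
  refine (norm_add_le _ _).trans ?_
  rw [norm_smul, norm_smul]
  have h1 : ‖lamB ‖x‖‖ ≤ 1 := by
    rw [Real.norm_eq_abs, abs_of_nonneg (lamB_nonneg _)]; exact lamB_le_one _
  by_cases hy3 : ‖y‖ ≤ 3
  · have h2 : ‖lamB ‖x‖ - lamB ‖y‖‖ ≤ (1/2) * ‖x - y‖ := by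
      rw [Real.norm_eq_abs]
      refine (lamB_lip _ _).trans ?_
      have := abs_norm_sub_norm_le x y
      nlinarith [abs_nonneg (‖x‖ - ‖y‖)]
    nlinarith [norm_nonneg (x - y), norm_nonneg y,
      mul_le_mul h2 hy3 (norm_nonneg y) (by positivity),
      mul_le_mul_of_nonneg_right h1 (norm_nonneg (x - y))]
  · push_neg at hy3
    rw [lamB_of_ge (r := ‖x‖) (by linarith), lamB_of_ge (r := ‖y‖) (by linarith)]
    simp


lemma lip_scale : LipschitzWith (1/2)
    (fun z : Fin n → ℝ => ((1:ℝ)/5 * lamB ‖z‖) • z) := by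
  refine LipschitzWith.of_dist_le_mul fun x y => ?_
  have key : ∀ a b : Fin n → ℝ, ‖lamB ‖a‖ • a - lamB ‖b‖ • b‖ ≤ (5/2) * ‖a - b‖ := by
    intro a b
    rcases le_total ‖b‖ ‖a‖ with h | h
    · exact lamB_smul_est_aux a b h
    · rw [norm_sub_rev, norm_sub_rev a b]
      exact lamB_smul_est_aux b a h
  rw [dist_eq_norm, dist_eq_norm]
  have : ((1:ℝ)/5 * lamB ‖x‖) • x - ((1:ℝ)/5 * lamB ‖y‖) • y
      = (1/5 : ℝ) • (lamB ‖x‖ • x - lamB ‖y‖ • y) := by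
    rw [smul_sub, smul_smul, smul_smul]
  rw [this, norm_smul]
  have := key x y
  push_cast
  rw [Real.norm_eq_abs, abs_of_pos (by norm_num : (0:ℝ) < 1/5)]
  linarith


variable {n : ℕ} {M : Type*} [TopologicalSpace M] [T2Space M] {U : Set M}

/-- Extend a map of the chart to the whole space by the identity. -/
noncomputable def extFun (φ : U ≃ₜ (Fin n → ℝ)) (e : (Fin n → ℝ) → (Fin n → ℝ)) : M → M :=
  fun x => if hx : x ∈ U then ((φ.symm (e (φ ⟨x, hx⟩)) : U) : M) else x

lemma extFun_mem (φ : U ≃ₜ (Fin n → ℝ)) (e : (Fin n → ℝ) → (Fin n → ℝ)) {x : M} (hx : x ∈ U) :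
    extFun φ e x = ((φ.symm (e (φ ⟨x, hx⟩)) : U) : M) ∧ extFun φ e x ∈ U := by
  rw [extFun, dif_pos hx]
  exact ⟨rfl, Subtype.coe_prop _⟩

lemma extFun_not_mem (φ : U ≃ₜ (Fin n → ℝ)) (e : (Fin n → ℝ) → (Fin n → ℝ)) {x : M}
    (hx : x ∉ U) : extFun φ e x = x := dif_neg hx

/-- Jointly-continuous extension of an isotopy supported in the ball of radius 3. -/
noncomputable def extIso (φ : U ≃ₜ (Fin n → ℝ)) (F : I × (Fin n → ℝ) → (Fin n → ℝ)) :
    I × M → M :=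
  fun p => if hx : p.2 ∈ U then ((φ.symm (F (p.1, φ ⟨p.2, hx⟩)) : U) : M) else p.2

lemma extIso_continuous (hU : IsOpen U) (φ : U ≃ₜ (Fin n → ℝ))
    (F : I × (Fin n → ℝ) → (Fin n → ℝ)) (hF : Continuous F)
    (hsupp : ∀ (t : I) (z : Fin n → ℝ), 3 ≤ ‖z‖ → F (t, z) = z) :
    Continuous (extIso φ F) := by
  set K : Set M := Subtype.val '' (φ.symm '' closedBall 0 3) with hK
  have hKcl : IsClosed K := by
    refine IsCompact.isClosed ?_
    exact ((isCompact_closedBall (0 : Fin n → ℝ) 3).image φ.symm.continuous).image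
      continuous_subtype_val
  have hKU : K ⊆ U := by
    rintro _ ⟨y, -, rfl⟩
    exact y.2
  -- identity outside K
  have hid : ∀ p : I × M, p.2 ∉ K → extIso φ F p = p.2 := by
    rintro ⟨t, x⟩ hx
    by_cases hxU : x ∈ U
    · have h3 : φ ⟨x, hxU⟩ ∉ closedBall (0 : Fin n → ℝ) 3 := by
        intro hmem
        exact hx ⟨φ.symm (φ ⟨x, hxU⟩), ⟨_, hmem, rfl⟩, by simp⟩
      rw [mem_closedBall, dist_zero_right, not_le] at h3
      rw [extIso, dif_pos hxU, hsupp t _ h3.le]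
      simp
    · exact dif_neg hxU
  rw [continuous_iff_continuousAt]
  rintro ⟨t, x⟩
  by_cases hxU : x ∈ U
  · have hsopen : IsOpen ((univ : Set I) ×ˢ U) := isOpen_univ.prod hU
    have hmem : (t, x) ∈ (univ : Set I) ×ˢ U := ⟨trivial, hxU⟩
    refine ContinuousOn.continuousAt ?_ (hsopen.mem_nhds hmem)
    rw [continuousOn_iff_continuous_restrict]
    have : restrict ((univ : Set I) ×ˢ U) (extIso φ F)
        = fun q => ((φ.symm (F (q.1.1, φ ⟨q.1.2, q.2.2⟩)) : U) : M) := by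
      funext q
      exact dif_pos q.2.2
    show Continuous (restrict ((univ : Set I) ×ˢ U) (extIso φ F))
    rw [this]
    refine continuous_subtype_val.comp <| φ.symm.continuous.comp <| hF.comp ?_
    refine Continuous.prodMk (continuous_fst.comp continuous_subtype_val) ?_
    exact φ.continuous.comp (Continuous.subtype_mk
      (continuous_snd.comp continuous_subtype_val) _)
  · have hxK : x ∉ K := fun h => hxU (hKU h)
    have hnhds : {p : I × M | p.2 ∉ K} ∈ nhds (t, x) := by
      refine IsOpen.mem_nhds ?_ hxK
      exact hKcl.isOpen_compl.preimage continuous_snd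
    refine ContinuousAt.congr (continuous_snd.continuousAt) ?_
    filter_upwards [hnhds] with p hp
    exact (hid p hp).symm

set_option linter.unusedSectionVars false

/-- Extend a compactly supported homeomorphism of the chart to the whole space. -/
noncomputable def extHomeo (hU : IsOpen U) (φ : U ≃ₜ (Fin n → ℝ))
    (e : (Fin n → ℝ) ≃ₜ (Fin n → ℝ)) (hsupp : ∀ z, 3 ≤ ‖z‖ → e z = z) : M ≃ₜ M where
  toFun := extFun φ e
  invFun := extFun φ e.symm
  left_inv := by
    intro x
    by_cases hx : x ∈ U
    · obtain ⟨h1, h2⟩ := extFun_mem φ e hx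
      obtain ⟨h3, -⟩ := extFun_mem φ e.symm h2
      have h4 : (⟨extFun φ ⇑e x, h2⟩ : U) = φ.symm (e (φ ⟨x, hx⟩)) := Subtype.ext h1
      rw [h3, h4]
      simp
    · rw [extFun_not_mem φ e hx, extFun_not_mem φ e.symm hx]
  right_inv := by
    intro x
    by_cases hx : x ∈ U
    · obtain ⟨h1, h2⟩ := extFun_mem φ e.symm hx
      obtain ⟨h3, -⟩ := extFun_mem φ e h2
      have h4 : (⟨extFun φ ⇑e.symm x, h2⟩ : U) = φ.symm (e.symm (φ ⟨x, hx⟩)) := Subtype.ext h1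
      rw [h3, h4]
      simp
    · rw [extFun_not_mem φ e.symm hx, extFun_not_mem φ e hx]
  continuous_toFun := by
    have := extIso_continuous hU φ (fun p => e p.2) (e.continuous.comp continuous_snd)
      (fun t z hz => hsupp z hz)
    have h5 : Continuous fun x : M => extIso φ (fun p => e p.2) ((0 : I), x) :=
      this.comp (Continuous.prodMk continuous_const continuous_id)
    exact h5
  continuous_invFun := by
    have hsupp' : ∀ z, 3 ≤ ‖z‖ → e.symm z = z := by
      intro z hz
      conv_lhs => rw [← hsupp z hz]
      simp
    have := extIso_continuous hU φ (fun p => e.symm p.2)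
      (e.symm.continuous.comp continuous_snd) (fun t z hz => hsupp' z hz)
    have h5 : Continuous fun x : M => extIso φ (fun p => e.symm p.2) ((0 : I), x) :=
      this.comp (Continuous.prodMk continuous_const continuous_id)
    exact h5

lemma extHomeo_coe (hU : IsOpen U) (φ : U ≃ₜ (Fin n → ℝ))
    (e : (Fin n → ℝ) ≃ₜ (Fin n → ℝ)) (hsupp : ∀ z, 3 ≤ ‖z‖ → e z = z) :
    ⇑(extHomeo hU φ e hsupp) = extFun φ ⇑e := rfl

/-- The main workhorse: a Lipschitz-small compactly supported perturbation of the identity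
in a chart extends to a homeomorphism of `M` isotopic to the identity. -/
lemma exists_isotopic_ext {n : ℕ} {M : Type*} [TopologicalSpace M] [T2Space M] {U : Set M}
    (hU : IsOpen U) (φ : U ≃ₜ (Fin n → ℝ)) (g : (Fin n → ℝ) → (Fin n → ℝ))
    (hg : LipschitzWith (1/2) g) (hsupp : ∀ z, 3 ≤ ‖z‖ → g z = 0) :
    ∃ h : M ≃ₜ M, IsotopicToId h ∧
      ∀ x : U, h x = ((φ.symm (φ x + g (φ x)) : U) : M) := by
  have slice : ∀ t : I, ∃ e : (Fin n → ℝ) ≃ₜ (Fin n → ℝ),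
      ⇑e = fun z => z + (t : ℝ) • g z := by
    intro t
    refine exists_pert_homeo _ (1/2) (by
      have : ((1/2 : NNReal) : ℝ) < ((1 : NNReal) : ℝ) := by norm_num
      exact_mod_cast this) ?_
    refine LipschitzWith.of_dist_le_mul fun x y => ?_
    have h1 := hg.dist_le_mul x y
    calc dist ((t : ℝ) • g x) ((t : ℝ) • g y) = ‖(t : ℝ)‖ * dist (g x) (g y) :=
          dist_smul₀ _ _ _
      _ ≤ 1 * dist (g x) (g y) := by
          apply mul_le_mul_of_nonneg_right _ dist_nonneg
          rw [Real.norm_eq_abs, abs_of_nonneg t.2.1]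
          exact t.2.2
      _ ≤ ((1/2 : NNReal) : ℝ) * dist x y := by rw [one_mul]; exact h1
  obtain ⟨e1, he1⟩ := slice 1
  have he1' : ∀ z, e1 z = z + g z := by
    intro z
    rw [he1]
    norm_num
  have hsupp1 : ∀ z, 3 ≤ ‖z‖ → e1 z = z := by
    intro z hz
    rw [he1' z, hsupp z hz, add_zero]
  refine ⟨extHomeo hU φ e1 hsupp1, ?_, ?_⟩
  · set F : I × (Fin n → ℝ) → (Fin n → ℝ) := fun p => p.2 + (p.1 : ℝ) • g p.2 with hF
    have hFc : Continuous F :=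
      continuous_snd.add ((continuous_subtype_val.comp continuous_fst).smul
        (hg.continuous.comp continuous_snd))
    have hFsupp : ∀ (t : I) z, 3 ≤ ‖z‖ → F (t, z) = z := by
      intro t z hz
      simp [hF, hsupp z hz]
    refine ⟨extIso φ F, extIso_continuous hU φ F hFc hFsupp, ?_, ?_, ?_⟩
    · intro t
      obtain ⟨et, het⟩ := slice t
      have hsuppt : ∀ z, 3 ≤ ‖z‖ → et z = z := by
        intro z hz
        rw [het]
        simp [hsupp z hz]
      refine ⟨extHomeo hU φ et hsuppt, ?_⟩
      funext x
      rw [extHomeo_coe]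
      show extFun φ ⇑et x = extIso φ F (t, x)
      unfold extFun extIso
      by_cases hx : x ∈ U
      · rw [dif_pos hx, dif_pos hx, het]
      · rw [dif_neg hx, dif_neg hx]
    · intro x
      show extIso φ F (0, x) = x
      unfold extIso
      by_cases hx : x ∈ U
      · rw [dif_pos hx]
        have h0 : F ((0 : I), φ ⟨x, hx⟩) = φ ⟨x, hx⟩ := by simp [hF]
        rw [h0]
        simp
      · exact dif_neg hx
    · intro x
      show extIso φ F (1, x) = extHomeo hU φ e1 hsupp1 x
      rw [extHomeo_coe]
      unfold extIso extFun
      by_cases hx : x ∈ U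
      · rw [dif_pos hx, dif_pos hx]
        have h0 : F ((1 : I), φ ⟨x, hx⟩) = e1 (φ ⟨x, hx⟩) := by
          rw [he1' (φ ⟨x, hx⟩)]
          simp [hF]
        rw [h0]
      · rw [dif_neg hx, dif_neg hx]
  · intro x
    obtain ⟨h1, -⟩ := extFun_mem φ ⇑e1 x.2
    rw [extHomeo_coe]
    rw [show (⟨(x : M), x.2⟩ : U) = x from Subtype.coe_eta .. ] at h1
    rw [h1, he1' (φ x)]

/-- Local moves: within a chart ball, points can be moved to/from the center by
homeomorphisms isotopic to the identity. -/
lemma local_move {n : ℕ} {M : Type*} [TopologicalSpace M] [T2Space M] {U : Set M}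
    (hU : IsOpen U) (φ : U ≃ₜ (Fin n → ℝ)) {x : M} (hx : x ∈ U) (hφ0 : φ ⟨x, hx⟩ = 0)
    {z : Fin n → ℝ} (hz : ‖z‖ < 1) :
    (∃ τ : M ≃ₜ M, IsotopicToId τ ∧ τ x = ((φ.symm z : U) : M)) ∧
    (∃ τ : M ≃ₜ M, IsotopicToId τ ∧ τ ((φ.symm z : U) : M) = x) := by
  constructor
  · obtain ⟨τ, hτI, hτ⟩ := exists_isotopic_ext hU φ (fun w => lamB ‖w‖ • z)
      (lip_translate z hz.le) (fun w hw => by show lamB ‖w‖ • _ = 0; rw [lamB_of_ge hw, zero_smul])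
    refine ⟨τ, hτI, ?_⟩
    have := hτ ⟨x, hx⟩
    rw [hφ0] at this
    rw [this]
    congr 1
    rw [norm_zero, lamB_of_le_one (by norm_num : (0:ℝ) ≤ 1), one_smul, zero_add]
  · obtain ⟨τ, hτI, hτ⟩ := exists_isotopic_ext hU φ (fun w => lamB ‖w‖ • (-z))
      (lip_translate (-z) (by rw [norm_neg]; exact hz.le)) (fun w hw => by show lamB ‖w‖ • _ = 0; rw [lamB_of_ge hw, zero_smul])
    refine ⟨τ, hτI, ?_⟩
    have := hτ (φ.symm z)
    rw [Homeomorph.apply_symm_apply] at this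
    rw [this]
    have hz1 : z + lamB ‖z‖ • (-z) = 0 := by
      rw [lamB_of_le_one hz.le, one_smul, add_neg_cancel]
    rw [hz1, show φ.symm 0 = ⟨x, hx⟩ by rw [← hφ0, Homeomorph.symm_apply_apply]]

/-- Homogeneity: on a connected chartable space, any point can be mapped to any other
point by a homeomorphism isotopic to the identity. -/
lemma exists_isotopic_moving {n : ℕ} {M : Type*} [TopologicalSpace M] [T2Space M]
    [ConnectedSpace M]
    (charts : ∀ x : M, ∃ U : Set M, ∃ hx : x ∈ U, IsOpen U ∧
      ∃ φ : U ≃ₜ (Fin n → ℝ), φ ⟨x, hx⟩ = 0)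
    (p q : M) : ∃ h : M ≃ₜ M, IsotopicToId h ∧ h p = q := by
  set C := {q : M | ∃ h : M ≃ₜ M, IsotopicToId h ∧ h p = q} with hC
  have hBall : ∀ x : M, ∀ U : Set M, ∀ hx : x ∈ U, IsOpen U →
      ∀ φ : U ≃ₜ (Fin n → ℝ), φ ⟨x, hx⟩ = 0 →
      (x ∈ Subtype.val '' (φ.symm '' ball 0 1)) := by
    intro x U hx hUo φ hφ0
    exact ⟨φ.symm 0, ⟨0, mem_ball_self one_pos, rfl⟩, by
      rw [show φ.symm 0 = ⟨x, hx⟩ by rw [← hφ0, Homeomorph.symm_apply_apply]]⟩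
  have hopen : IsOpen C := by
    rw [isOpen_iff_mem_nhds]
    intro x hxC
    obtain ⟨U, hx, hUo, φ, hφ0⟩ := charts x
    have hBo : IsOpen (Subtype.val '' (φ.symm '' ball 0 1)) :=
      hUo.isOpenMap_subtype_val _ (φ.symm.isOpenMap _ isOpen_ball)
    refine Filter.mem_of_superset (hBo.mem_nhds (hBall x U hx hUo φ hφ0)) ?_
    rintro _ ⟨_, ⟨z, hz, rfl⟩, rfl⟩
    obtain ⟨h, hI, hp⟩ := hxC
    obtain ⟨⟨τ, hτI, hτ⟩, -⟩ := local_move hUo φ hx hφ0 (mem_ball_zero_iff.mp hz)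
    exact ⟨h.trans τ, isotopicToId_trans hI hτI, by rw [Homeomorph.trans_apply, hp, hτ]⟩
  have hclosed : IsClosed C := by
    rw [← isOpen_compl_iff, isOpen_iff_mem_nhds]
    intro x hxC
    obtain ⟨U, hx, hUo, φ, hφ0⟩ := charts x
    have hBo : IsOpen (Subtype.val '' (φ.symm '' ball 0 1)) :=
      hUo.isOpenMap_subtype_val _ (φ.symm.isOpenMap _ isOpen_ball)
    refine Filter.mem_of_superset (hBo.mem_nhds (hBall x U hx hUo φ hφ0)) ?_
    rintro _ ⟨_, ⟨z, hz, rfl⟩, rfl⟩ hmem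
    obtain ⟨h, hI, hp⟩ := hmem
    obtain ⟨-, ⟨τ, hτI, hτ⟩⟩ := local_move hUo φ hx hφ0 (mem_ball_zero_iff.mp hz)
    exact hxC ⟨h.trans τ, isotopicToId_trans hI hτI, by rw [Homeomorph.trans_apply, hp, hτ]⟩
  have hne : p ∈ C := ⟨Homeomorph.refl M, isotopicToId_refl, rfl⟩
  have : C = univ := IsClopen.eq_univ ⟨hclosed, hopen⟩ ⟨p, hne⟩
  have hq : q ∈ C := this ▸ mem_univ q
  exact hq

/-- The expansion step: a fixed homeomorphism isotopic to the identity which expands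
chart balls of radius `r ≤ 1` by a factor `6/5` (truncated at radius 1). -/
lemma scale_step {n : ℕ} {M : Type*} [TopologicalSpace M] [T2Space M] {U : Set M}
    (hU : IsOpen U) (φ : U ≃ₜ (Fin n → ℝ)) :
    ∃ hs : M ≃ₜ M, IsotopicToId hs ∧ ∀ r : ℝ, r ≤ 1 →
      Subtype.val '' (φ.symm '' ball 0 (min 1 ((6/5) * r)))
        ⊆ hs '' (Subtype.val '' (φ.symm '' ball 0 r)) := by
  obtain ⟨hs, hsI, hval⟩ := exists_isotopic_ext hU φ
    (fun w => ((1:ℝ)/5 * lamB ‖w‖) • w) lip_scale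
    (fun w hw => by show ((1:ℝ)/5 * lamB ‖w‖) • w = 0; rw [lamB_of_ge hw, mul_zero, zero_smul])
  refine ⟨hs, hsI, fun r hr => ?_⟩
  rintro _ ⟨_, ⟨y, hy, rfl⟩, rfl⟩
  rw [mem_ball_zero_iff, lt_min_iff] at hy
  obtain ⟨hy1, hy2⟩ := hy
  set zz : Fin n → ℝ := (5/6 : ℝ) • y with hzz
  have hnzz : ‖zz‖ = (5/6) * ‖y‖ := by
    rw [hzz, norm_smul, Real.norm_eq_abs, abs_of_pos (by norm_num : (0:ℝ) < 5/6)]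
  have hzr : ‖zz‖ < r := by
    rw [hnzz]
    nlinarith
  have hz1 : ‖zz‖ ≤ 1 := by
    rw [hnzz]
    nlinarith
  have hlam : lamB ‖zz‖ = 1 := lamB_of_le_one hz1
  have hval' := hval (φ.symm zz)
  rw [Homeomorph.apply_symm_apply, hlam, mul_one] at hval'
  have hcomb : zz + ((1:ℝ)/5) • zz = y := by
    rw [hzz, smul_smul]
    rw [show (1:ℝ)/5 * (5/6) = 1/6 by norm_num, ← add_smul]
    norm_num
  rw [← hcomb]
  exact ⟨(φ.symm zz : M), ⟨φ.symm zz, ⟨zz, mem_ball_zero_iff.mpr hzr, rfl⟩, rfl⟩, hval'⟩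

end Auxiliary

section Main
open Metric

/-- **Finite filling for closed manifolds.**  For a nonempty connected closed topological
`n`-manifold `M`, there is `N ∈ ℕ` such that every nonempty open `V ⊆ M` has `N` images
under homeomorphisms isotopic to the identity which cover `M`; i.e. the action of
`H₀(M) ↷ M` has the finite filling property. -/
theorem closed_manifold_finite_filling
    {M : Type*} [TopologicalSpace M] [CompactSpace M] [TopologicalSpace.MetrizableSpace M]
    [ConnectedSpace M] [Nonempty M] (n : ℕ)
    (hchart : ∀ x : M, ∃ U : Set M, x ∈ U ∧ IsOpen U ∧ Nonempty (U ≃ₜ (Fin n → ℝ))) :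
    ∃ N : ℕ, ∀ V : Set M, IsOpen V → V.Nonempty →
      ∃ h : Fin N → M ≃ₜ M, (∀ i, IsotopicToId (h i)) ∧ (⋃ i, h i '' V) = univ := by
  classical
  have charts : ∀ x : M, ∃ U : Set M, ∃ hx : x ∈ U, IsOpen U ∧
      ∃ φ : U ≃ₜ (Fin n → ℝ), φ ⟨x, hx⟩ = 0 := by
    intro x
    obtain ⟨U, hxU, hUo, ⟨ψ⟩⟩ := hchart x
    exact ⟨U, hxU, hUo, ψ.trans (Homeomorph.subRight (ψ ⟨x, hxU⟩)), by simp⟩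
  choose Ux hmem hopen φx hφ0 using charts
  set B : M → Set M := fun x => Subtype.val '' ((φx x).symm '' ball 0 1) with hB
  have hBopen : ∀ x, IsOpen (B x) := fun x =>
    (hopen x).isOpenMap_subtype_val _ ((φx x).symm.isOpenMap _ isOpen_ball)
  have hBx : ∀ x, x ∈ B x := fun x =>
    ⟨(φx x).symm 0, ⟨0, mem_ball_self one_pos, rfl⟩, by
      rw [show (φx x).symm 0 = ⟨x, hmem x⟩ by rw [← hφ0 x, Homeomorph.symm_apply_apply]]⟩
  obtain ⟨s, hs⟩ := isCompact_univ.elim_finite_subcover B hBopen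
    (fun x _ => mem_iUnion.mpr ⟨x, hBx x⟩)
  refine ⟨s.card, fun V hV hVne => ?_⟩
  have main : ∀ c : M, ∃ h : M ≃ₜ M, IsotopicToId h ∧ B c ⊆ h '' V := by
    intro c
    obtain ⟨v, hv⟩ := hVne
    obtain ⟨h₀, h₀I, h₀v⟩ := exists_isotopic_moving
      (fun x => ⟨Ux x, hmem x, hopen x, φx x, hφ0 x⟩) v c
    set W : Set M := h₀ '' V with hW
    have hWo : IsOpen W := h₀.isOpenMap _ hV
    have hcW : c ∈ W := ⟨v, hv, h₀v⟩
    set S : Set (Fin n → ℝ) := φx c '' (Subtype.val ⁻¹' W) with hS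
    have hSo : IsOpen S := (φx c).isOpenMap _ (hWo.preimage continuous_subtype_val)
    have h0S : (0 : Fin n → ℝ) ∈ S := ⟨⟨c, hmem c⟩, hcW, hφ0 c⟩
    obtain ⟨ε, hε, hball⟩ := Metric.isOpen_iff.mp hSo 0 h0S
    set ε₀ : ℝ := min ε 1 with hε₀def
    have hε₀pos : 0 < ε₀ := lt_min hε one_pos
    have hε₀le : ε₀ ≤ 1 := min_le_right _ _
    have hball₀ : ball (0 : Fin n → ℝ) ε₀ ⊆ S :=
      (ball_subset_ball (min_le_left _ _)).trans hball
    obtain ⟨hs', hsI, hstep⟩ := scale_step (hopen c) (φx c)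
    have ind : ∀ k : ℕ, ∃ h : M ≃ₜ M, IsotopicToId h ∧
        Subtype.val '' ((φx c).symm '' ball 0 (min 1 (ε₀ * (6/5)^k))) ⊆ h '' W := by
      intro k
      induction k with
      | zero =>
        refine ⟨Homeomorph.refl M, isotopicToId_refl, ?_⟩
        rw [pow_zero, mul_one, min_eq_right hε₀le,
          show ⇑(Homeomorph.refl M) = id from rfl, image_id]
        rintro _ ⟨u, ⟨z, hz, rfl⟩, rfl⟩
        obtain ⟨w, hw, hwz⟩ := hball₀ hz
        rw [show (φx c).symm z = w by rw [← hwz, Homeomorph.symm_apply_apply]]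
        exact hw
      | succ k ih =>
        obtain ⟨h, hI, hsub⟩ := ih
        refine ⟨h.trans hs', isotopicToId_trans hI hsI, ?_⟩
        have harith : min 1 (ε₀ * (6/5)^(k+1)) = min 1 ((6/5) * min 1 (ε₀ * (6/5)^k)) := by
          rcases le_total (ε₀ * (6/5)^k) 1 with h1 | h1
          · rw [min_eq_right h1, pow_succ]
            ring_nf
          · have h2 : (1:ℝ) ≤ ε₀ * (6/5)^(k+1) := by
              rw [pow_succ]
              nlinarith
            rw [min_eq_left h1, mul_one, min_eq_left (by norm_num : (1:ℝ) ≤ 6/5),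
              min_eq_left h2]
        rw [harith]
        refine (hstep _ (min_le_left _ _)).trans ?_
        refine (image_mono hsub).trans ?_
        rw [show ⇑(h.trans hs') = ⇑hs' ∘ ⇑h from rfl, image_comp]
    obtain ⟨k, hk⟩ := pow_unbounded_of_one_lt (1/ε₀) (by norm_num : (1:ℝ) < 6/5)
    obtain ⟨h, hI, hsub⟩ := ind k
    have hmin : min 1 (ε₀ * (6/5)^k) = 1 := by
      rw [min_eq_left]
      rw [div_lt_iff₀ hε₀pos] at hk
      nlinarith
    rw [hmin] at hsub
    refine ⟨h₀.trans h, isotopicToId_trans h₀I hI, ?_⟩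
    rw [show ⇑(h₀.trans h) = ⇑h ∘ ⇑h₀ from rfl, image_comp]
    exact hsub
  choose hh hhI hhB using main
  refine ⟨fun i => hh ((s.equivFin.symm i) : M), fun i => hhI _, ?_⟩
  rw [eq_univ_iff_forall]
  intro y
  have hy := hs (mem_univ y)
  rw [mem_iUnion₂] at hy
  obtain ⟨x, hxs, hyx⟩ := hy
  rw [mem_iUnion]
  refine ⟨s.equivFin ⟨x, hxs⟩, ?_⟩
  simp only [Equiv.symm_apply_apply]
  exact hhB x hyx

end Main
end

section
/- Let n ∈ ℕ, let V ⊆ ℝⁿ be an open set containing 0, and let K ⊆ ℝⁿ be compact. Then there exist a compact set C ⊆ ℝⁿ and a homeomorphism ψ : ℝⁿ → ℝⁿ with ψ(x) = x for all x ∉ C, K ⊆ ψ(V), and ψ isotopic to the identity through homeomorphisms supported in C: there is a continuous map F : [0,1]×ℝⁿ → ℝⁿ such that each F(t,·) is a homeomorphism of ℝⁿ equal to the identity outside C, F(0,·) = id, and F(1,·) = ψ. -/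
open Set Topology unitInterval

noncomputable def c₀ (ε R r : ℝ) : ℝ :=
  max 1 (min (1 + R / ε) ((max r ε + (ε + 2 * R)) / (2 * max r ε)))

lemma c0_cont {ε R : ℝ} (hε : 0 < ε) : Continuous (c₀ ε R) := by
  apply continuous_const.max
  apply continuous_const.min
  apply Continuous.div
  · exact (continuous_id.max continuous_const).add continuous_const
  · exact continuous_const.mul (continuous_id.max continuous_const)
  · intro r
    have h : 0 < max r ε := lt_of_lt_of_le hε (le_max_right r ε)
    exact (mul_pos two_pos h).ne'

lemma one_le_c0 {ε R r : ℝ} : 1 ≤ c₀ ε R r := le_max_left _ _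

lemma c0_eq_one {ε R r : ℝ} (hε : 0 < ε) (hR : 0 < R) (h : ε + 2 * R ≤ r) :
    c₀ ε R r = 1 := by
  have hεr : ε ≤ r := by linarith
  have hr : 0 < r := lt_of_lt_of_le hε hεr
  rw [c₀, max_eq_left hεr]
  apply max_eq_left
  have hq : (r + (ε + 2 * R)) / (2 * r) ≤ 1 := by
    rw [div_le_one (by linarith)]
    linarith
  exact (min_le_right _ _).trans hq

lemma c0_mul {ε R : ℝ} (hε : 0 < ε) (hR : 0 < R) {r : ℝ} (hr : 0 ≤ r) :
    c₀ ε R r * r = max r (min ((1 + R / ε) * r) ((r + (ε + 2 * R)) / 2)) := by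
  rcases le_total r ε with h | h
  · have hq : (max r ε + (ε + 2 * R)) / (2 * max r ε) = 1 + R / ε := by
      rw [max_eq_right h]
      field_simp
      ring
    have hα : (1 : ℝ) ≤ 1 + R / ε := le_add_of_nonneg_right (by positivity)
    rw [c₀, hq, min_self, max_eq_right hα]
    have h1 : R / ε * r ≤ R := by
      have h2 : R / ε * r ≤ R / ε * ε := mul_le_mul_of_nonneg_left h (by positivity)
      rwa [div_mul_cancel₀ _ hε.ne'] at h2
    have key : (1 + R / ε) * r ≤ (r + (ε + 2 * R)) / 2 := by
      rw [le_div_iff₀ (by norm_num : (0:ℝ) < 2)]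
      nlinarith [h1, h]
    rw [min_eq_left key, max_eq_right (le_mul_of_one_le_left hr hα)]
  · have hr0 : 0 < r := lt_of_lt_of_le hε h
    have h1 : R ≤ R / ε * r := by
      have h2 : R / ε * ε ≤ R / ε * r := mul_le_mul_of_nonneg_left h (by positivity)
      rwa [div_mul_cancel₀ _ hε.ne'] at h2
    have hq : (r + (ε + 2 * R)) / (2 * r) ≤ 1 + R / ε := by
      rw [div_le_iff₀ (by linarith)]
      nlinarith [h1, h]
    rw [c₀, max_eq_left h, min_eq_right hq,
      max_mul_of_nonneg _ _ hr, one_mul]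
    have hq2 : (r + (ε + 2 * R)) / (2 * r) * r = (r + (ε + 2 * R)) / 2 := by
      field_simp
    rw [hq2]
    have key : (r + (ε + 2 * R)) / 2 ≤ (1 + R / ε) * r := by
      rw [div_le_iff₀ (by norm_num : (0:ℝ) < 2)]
      nlinarith [h1, h]
    rw [min_eq_right key]

lemma f1_strictMono {ε R : ℝ} (hε : 0 < ε) (hR : 0 < R) :
    StrictMono (fun r : ℝ => max r (min ((1 + R / ε) * r) ((r + (ε + 2 * R)) / 2))) := by
  intro a b hab
  dsimp only
  apply max_lt_max hab
  apply min_lt_min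
  · have h : (0:ℝ) < 1 + R / ε := by positivity
    exact (mul_lt_mul_iff_right₀ h).2 hab
  · linarith

lemma fAux_strictMono {ε R t : ℝ} (hε : 0 < ε) (hR : 0 < R) (ht0 : 0 ≤ t) (ht1 : t ≤ 1) :
    StrictMono (fun r : ℝ =>
      (1 - t) * r + t * max r (min ((1 + R / ε) * r) ((r + (ε + 2 * R)) / 2))) := by
  rcases eq_or_lt_of_le ht0 with rfl | ht
  · intro a b hab; simpa using hab
  · intro a b hab
    dsimp only
    have h1 := f1_strictMono hε hR hab
    have h2 : (1 - t) * a ≤ (1 - t) * b := mul_le_mul_of_nonneg_left hab.le (by linarith)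
    dsimp only at h1
    nlinarith [h1, h2]

/-- **Engulfing in ℝⁿ.**  For an open `V ∋ 0` and compact `K` in `ℝⁿ`, there is a
homeomorphism `ψ` of `ℝⁿ`, equal to the identity outside some compact set `C`, with
`K ⊆ ψ(V)`, and `ψ` is isotopic to the identity through homeomorphisms supported in `C`. -/
theorem euclidean_engulfing
    (n : ℕ) (V : Set (Fin n → ℝ)) (hV : IsOpen V) (h0 : (0 : Fin n → ℝ) ∈ V)
    (K : Set (Fin n → ℝ)) (hK : IsCompact K) :
    ∃ C : Set (Fin n → ℝ), IsCompact C ∧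
      ∃ ψ : (Fin n → ℝ) ≃ₜ (Fin n → ℝ),
        (∀ x ∉ C, ψ x = x) ∧ K ⊆ ψ '' V ∧
        ∃ F : I × (Fin n → ℝ) → (Fin n → ℝ), Continuous F ∧
          (∀ t : I, (∃ e : (Fin n → ℝ) ≃ₜ (Fin n → ℝ),
              (⇑e : (Fin n → ℝ) → (Fin n → ℝ)) = fun x => F (t, x)) ∧
            ∀ x ∉ C, F (t, x) = x) ∧
          (∀ x, F (0, x) = x) ∧ (∀ x, F (1, x) = ψ x) := by
  classical
  obtain ⟨ε, hε, hballV⟩ := Metric.isOpen_iff.mp hV 0 h0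
  obtain ⟨R, hR, hKR⟩ := hK.isBounded.subset_ball_lt 0 0
  set Lr : ℝ := ε + 2 * R with hLrdef
  set s : ℝ → ℝ → ℝ := fun t r => (1 - t) + t * c₀ ε R r with hsdef
  set Fm : I × (Fin n → ℝ) → (Fin n → ℝ) := fun p => s p.1 ‖p.2‖ • p.2 with hFmdef
  set g : ℝ → ℝ → ℝ := fun t r => (1 - t) * r + t * (c₀ ε R r * r) with hgdef
  have hs1 : ∀ (t : I) (r : ℝ), 1 ≤ s t.1 r := by
    intro t r
    have h1 : 1 ≤ c₀ ε R r := one_le_c0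
    have ht0 := t.2.1
    have ht1 := t.2.2
    simp only [hsdef]
    nlinarith
  have hspos : ∀ (t : I) (r : ℝ), 0 < s t.1 r := fun t r => lt_of_lt_of_le one_pos (hs1 t r)
  have hsg : ∀ t r : ℝ, s t r * r = g t r := by
    intro t r
    simp only [hsdef, hgdef]
    ring
  have hnorm : ∀ (t : I) (x : Fin n → ℝ), ‖Fm (t, x)‖ = g t.1 ‖x‖ := by
    intro t x
    simp only [hFmdef]
    rw [norm_smul, Real.norm_eq_abs, abs_of_pos (hspos t _), hsg]
  have hgmono : ∀ t : I, StrictMonoOn (g t.1) (Ici 0) := by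
    intro t a ha b hb hab
    have ha' : (0:ℝ) ≤ a := ha
    have hb' : (0:ℝ) ≤ b := hb
    simp only [hgdef]
    rw [c0_mul hε hR ha', c0_mul hε hR hb']
    exact fAux_strictMono hε hR t.2.1 t.2.2 hab
  have hgcont : ∀ t : ℝ, Continuous (g t) := by
    intro t
    simp only [hgdef]
    exact (continuous_const.mul continuous_id).add
      (continuous_const.mul ((c0_cont hε).mul continuous_id))
  have hg0 : ∀ t : ℝ, g t 0 = 0 := by intro t; simp [hgdef]
  have hcont : Continuous Fm := by
    apply Continuous.smul (f := fun p : I × (Fin n → ℝ) => s p.1 ‖p.2‖) _ continuous_snd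
    exact (continuous_const.sub (continuous_subtype_val.comp continuous_fst)).add
      ((continuous_subtype_val.comp continuous_fst).mul
        ((c0_cont hε).comp (continuous_norm.comp continuous_snd)))
  have hid : ∀ (t : I) (x : Fin n → ℝ), Lr ≤ ‖x‖ → Fm (t, x) = x := by
    intro t x hx
    simp only [hFmdef, hsdef]
    rw [c0_eq_one hε hR hx]
    have h1 : (1 - (t:ℝ)) + (t:ℝ) * 1 = 1 := by ring
    rw [h1, one_smul]
  have hsolve : ∀ (t : I) (y : Fin n → ℝ) (b : ℝ), 0 ≤ b → ‖y‖ ≤ g t.1 b →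
      ∃ x, ‖x‖ ≤ b ∧ (‖y‖ < g t.1 b → ‖x‖ < b) ∧ Fm (t, x) = y := by
    intro t y b hb hby
    rcases eq_or_ne y 0 with rfl | hy
    · refine ⟨0, by simpa using hb, ?_, by simp only [hFmdef]; simp⟩
      intro hlt
      simp only [norm_zero]
      rcases eq_or_lt_of_le hb with rfl | h
      · rw [hg0] at hlt; simp at hlt
      · exact h
    · have hy0 : 0 < ‖y‖ := norm_pos_iff.mpr hy
      have hmem : ‖y‖ ∈ Icc (g t.1 0) (g t.1 b) := ⟨by rw [hg0]; exact hy0.le, hby⟩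
      obtain ⟨r, hrmem, hr⟩ := intermediate_value_Icc hb ((hgcont t.1).continuousOn) hmem
      have hr0 : 0 ≤ r := hrmem.1
      have hxnorm : ‖(r / ‖y‖) • y‖ = r := by
        rw [norm_smul, Real.norm_eq_abs, abs_of_nonneg (div_nonneg hr0 hy0.le),
          div_mul_cancel₀ _ hy0.ne']
      refine ⟨(r / ‖y‖) • y, by rw [hxnorm]; exact hrmem.2, ?_, ?_⟩
      · intro hlt
        rw [hxnorm]
        rcases eq_or_lt_of_le hrmem.2 with rfl | h
        · rw [hr] at hlt; exact absurd hlt (lt_irrefl _)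
        · exact h
      · simp only [hFmdef]
        rw [hxnorm, smul_smul]
        have hkey : s t.1 r * (r / ‖y‖) = 1 := by
          rw [show s (t:ℝ) r * (r / ‖y‖) = s (t:ℝ) r * r / ‖y‖ by ring, hsg, hr,
            div_self hy0.ne']
        rw [hkey, one_smul]
  have hinj : ∀ t : I, Function.Injective (fun x => Fm (t, x)) := by
    intro t x y hxy
    simp only at hxy
    have hnx : g t.1 ‖x‖ = g t.1 ‖y‖ := by rw [← hnorm t x, ← hnorm t y, hxy]
    have hxy' : ‖x‖ = ‖y‖ := (hgmono t).injOn (norm_nonneg x) (norm_nonneg y) hnx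
    have h2 : s t.1 ‖y‖ • x = s t.1 ‖y‖ • y := by
      have h3 := hxy
      simp only [hFmdef] at h3
      rwa [hxy'] at h3
    exact smul_right_injective _ (hspos t ‖y‖).ne' h2
  have hsurj : ∀ t : I, Function.Surjective (fun x => Fm (t, x)) := by
    intro t y
    set b := max Lr ‖y‖ with hbdef
    have hb : 0 ≤ b := le_trans (norm_nonneg y) (le_max_right _ _)
    have hLb : Lr ≤ b := le_max_left _ _
    have hgb : g t.1 b = b := by
      simp only [hgdef]
      rw [c0_eq_one hε hR hLb]
      ring
    obtain ⟨x, _, _, hx⟩ := hsolve t y b hb (by rw [hgb]; exact le_max_right _ _)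
    exact ⟨x, hx⟩
  have hclosed : ∀ t : I, IsClosedMap (fun x => Fm (t, x)) := by
    intro t A hA
    have himg : (fun x => Fm (t, x)) '' A =
        (fun x => Fm (t, x)) '' (A ∩ Metric.closedBall 0 Lr) ∪ (A ∩ (Metric.ball 0 Lr)ᶜ) := by
      apply Subset.antisymm
      · rintro _ ⟨x, hx, rfl⟩
        rcases le_or_gt ‖x‖ Lr with h | h
        · left
          exact ⟨x, ⟨hx, by simpa [Metric.mem_closedBall, dist_zero_right] using h⟩, rfl⟩
        · right
          simp only
          rw [hid t x h.le]
          refine ⟨hx, ?_⟩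
          simp only [mem_compl_iff, Metric.mem_ball, dist_zero_right, not_lt]
          linarith
      · rintro y (⟨x, ⟨hx, _⟩, rfl⟩ | ⟨hy, hy2⟩)
        · exact ⟨x, hx, rfl⟩
        · refine ⟨y, hy, ?_⟩
          have h : Lr ≤ ‖y‖ := by
            simpa [Metric.mem_ball, dist_zero_right, not_lt] using hy2
          exact hid t y h
    rw [himg]
    apply IsClosed.union
    · have hcompact : IsCompact (A ∩ Metric.closedBall 0 Lr) :=
        (isCompact_closedBall (0 : Fin n → ℝ) Lr).inter_left hA
      exact (hcompact.image (hcont.comp (Continuous.prodMk_right t))).isClosed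
    · exact hA.inter Metric.isOpen_ball.isClosed_compl
  have mkHomeo : ∀ t : I, ∃ e : (Fin n → ℝ) ≃ₜ (Fin n → ℝ),
      (⇑e : (Fin n → ℝ) → (Fin n → ℝ)) = fun x => Fm (t, x) := by
    intro t
    have hbij : Function.Bijective (fun x => Fm (t, x)) := ⟨hinj t, hsurj t⟩
    refine ⟨⟨Equiv.ofBijective _ hbij, hcont.comp (Continuous.prodMk_right t), ?_⟩, rfl⟩
    rw [continuous_iff_isClosed]
    intro A hA
    show IsClosed (⇑(Equiv.ofBijective (fun x => Fm (t, x)) hbij).symm ⁻¹' A)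
    rw [← Equiv.image_eq_preimage_symm]
    exact hclosed t A hA
  obtain ⟨ψ, hψ⟩ := mkHomeo 1
  refine ⟨Metric.closedBall 0 Lr, isCompact_closedBall _ _, ψ, ?_, ?_, Fm, hcont, ?_, ?_, ?_⟩
  · intro x hx
    have h : Lr ≤ ‖x‖ := by
      simp only [Metric.mem_closedBall, dist_zero_right, not_le] at hx
      exact hx.le
    rw [hψ]
    exact hid 1 x h
  · intro y hy
    have hyR : ‖y‖ < R := by
      have h := hKR hy
      simpa [Metric.mem_ball, dist_zero_right] using h
    have hgε : g ((1:I):ℝ) ε = ε + R := by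
      simp only [hgdef]
      rw [c0_mul hε hR hε.le]
      have h1 : (1 + R / ε) * ε = ε + R := by field_simp
      have h2 : (ε + (ε + 2 * R)) / 2 = ε + R := by ring
      rw [h1, h2, min_self, max_eq_right (by linarith)]
      norm_num
    obtain ⟨x, _, hxlt, hx⟩ := hsolve 1 y ε hε.le (by rw [hgε]; linarith)
    have hxball : x ∈ Metric.ball (0 : Fin n → ℝ) ε := by
      simp only [Metric.mem_ball, dist_zero_right]
      apply hxlt
      rw [hgε]
      linarith
    exact ⟨x, hballV hxball, by rw [hψ]; exact hx⟩
  · intro t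
    refine ⟨mkHomeo t, ?_⟩
    intro x hx
    have h : Lr ≤ ‖x‖ := by
      simp only [Metric.mem_closedBall, dist_zero_right, not_le] at hx
      exact hx.le
    exact hid t x h
  · intro x
    simp only [hFmdef, hsdef]
    norm_num
  · intro x
    rw [hψ]
end
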